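/- arXiv:2308.05560 — 4 statements merged into one kernel-verified Lean document; each statement's English description precedes it below -/
import Mathlib

section
/- Let H be a Hilbert space and (x_n) a bounded sequence in H. If lim_{h→∞} limsup_{N→∞} |(1/N)∑_{n=1}^N ⟨x_{n+h}, x_n⟩| = 0, then ‖(1/N)∑_{n=1}^N x_n‖ → 0 as N → ∞. -/
open Filter Finset
open scoped InnerProductSpace

lemma vdc_sum_shift {M : Type*} [AddCommMonoid M] (f : ℕ → M) (h N : ℕ) :
    ∑ n ∈ Finset.Ioc 0 N, f (n + h) = ∑ m ∈ Finset.Ioc h (N + h), f m := by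
  have : Finset.Ioc h (N + h) = (Finset.Ioc 0 N).map (addRightEmbedding h) := by
    rw [Finset.map_add_right_Ioc]; simp
  rw [this, Finset.sum_map]
  rfl

lemma vdc_norm_sum_Ioc_le {E : Type*} [SeminormedAddCommGroup E] (f : ℕ → E) {B : ℝ}
    (hf : ∀ n, ‖f n‖ ≤ B) (a b : ℕ) :
    ‖∑ m ∈ Finset.Ioc a b, f m‖ ≤ ((b - a : ℕ) : ℝ) * B := by
  calc ‖∑ m ∈ Finset.Ioc a b, f m‖ ≤ ∑ m ∈ Finset.Ioc a b, ‖f m‖ := norm_sum_le _ _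
    _ ≤ (Finset.Ioc a b).card • B := Finset.sum_le_card_nsmul _ _ _ (fun i _ => hf i)
    _ = ((b - a : ℕ) : ℝ) * B := by rw [Nat.card_Ioc, nsmul_eq_mul]

lemma vdc_shift_diff {E : Type*} [SeminormedAddCommGroup E] (f : ℕ → E) {B : ℝ}
    (hf : ∀ n, ‖f n‖ ≤ B) (h N : ℕ) :
    ‖(∑ n ∈ Finset.Ioc 0 N, f (n + h)) - ∑ n ∈ Finset.Ioc 0 N, f n‖ ≤ 2 * h * B := by
  have hB : 0 ≤ B := le_trans (norm_nonneg _) (hf 0)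
  rw [vdc_sum_shift]
  have e1 : (∑ m ∈ Finset.Ioc 0 h, f m) + ∑ m ∈ Finset.Ioc h (N + h), f m
      = ∑ m ∈ Finset.Ioc 0 (N + h), f m :=
    Finset.sum_Ioc_consecutive f (Nat.zero_le h) (Nat.le_add_left h N)
  have e2 : (∑ m ∈ Finset.Ioc 0 N, f m) + ∑ m ∈ Finset.Ioc N (N + h), f m
      = ∑ m ∈ Finset.Ioc 0 (N + h), f m :=
    Finset.sum_Ioc_consecutive f (Nat.zero_le N) (Nat.le_add_right N h)
  have key : (∑ m ∈ Finset.Ioc h (N + h), f m) - ∑ m ∈ Finset.Ioc 0 N, f m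
      = (∑ m ∈ Finset.Ioc N (N + h), f m) - ∑ m ∈ Finset.Ioc 0 h, f m := by
    have h3 := e1.trans e2.symm
    rw [sub_eq_sub_iff_add_eq_add, add_comm,
      add_comm (∑ m ∈ Finset.Ioc N (N + h), f m)]
    exact h3
  rw [key]
  calc ‖_ - _‖ ≤ ‖∑ m ∈ Finset.Ioc N (N + h), f m‖ + ‖∑ m ∈ Finset.Ioc 0 h, f m‖ :=
        norm_sub_le _ _
    _ ≤ ((N + h - N : ℕ) : ℝ) * B + ((h - 0 : ℕ) : ℝ) * B := by
        gcongr <;> exact vdc_norm_sum_Ioc_le f hf _ _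
    _ ≤ 2 * h * B := by
        simp only [Nat.add_sub_cancel_left, Nat.sub_zero]
        nlinarith [Nat.cast_nonneg (α := ℝ) h]

set_option maxHeartbeats 1600000 in
theorem vdc_variant_ii
    {H : Type*} [NormedAddCommGroup H] [InnerProductSpace ℂ H] [CompleteSpace H]
    (x : ℕ → H) (hbdd : ∃ C : ℝ, ∀ n, ‖x n‖ ≤ C)
    (hyp : Tendsto
      (fun h : ℕ => Filter.limsup
        (fun N : ℕ => ‖((N : ℂ))⁻¹ * ∑ n ∈ Finset.Icc 1 N, ⟪x (n + h), x n⟫_ℂ‖)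
        atTop)
      atTop (nhds 0)) :
    Tendsto (fun N : ℕ => ‖((N : ℝ))⁻¹ • ∑ n ∈ Finset.Icc 1 N, x n‖)
      atTop (nhds 0) := by
  obtain ⟨C, hC⟩ := hbdd
  set B : ℝ := max C 1 with hBdef
  have hB1 : (1:ℝ) ≤ B := le_max_right _ _
  have hB0 : (0:ℝ) < B := zero_lt_one.trans_le hB1
  have hxB : ∀ n, ‖x n‖ ≤ B := fun n => (hC n).trans (le_max_left _ _)
  have hIcc : ∀ N : ℕ, Finset.Icc 1 N = Finset.Ioc 0 N := by
    intro N; ext m; simp [Nat.lt_iff_add_one_le]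
  set g : ℕ → ℕ → ℝ :=
    fun d N => ‖((N : ℂ))⁻¹ * ∑ n ∈ Finset.Icc 1 N, ⟪x (n + d), x n⟫_ℂ‖ with hgdef
  set G : ℕ → ℕ → ℝ := fun d N => ‖∑ n ∈ Finset.Ioc 0 N, ⟪x (n + d), x n⟫_ℂ‖ with hGdef
  have hgG : ∀ d N, g d N = (N:ℝ)⁻¹ * G d N := by
    intro d N
    rw [hgdef, hGdef]
    simp only [hIcc, norm_mul, norm_inv, Complex.norm_natCast]
  have hinner : ∀ a b : ℕ, ‖⟪x a, x b⟫_ℂ‖ ≤ B ^ 2 := by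
    intro a b
    calc ‖⟪x a, x b⟫_ℂ‖ ≤ ‖x a‖ * ‖x b‖ := norm_inner_le_norm _ _
      _ ≤ B * B := by
          gcongr <;> first | exact hxB _ | exact norm_nonneg _
      _ = B ^ 2 := (sq B).symm
  have hGnn : ∀ d N, 0 ≤ G d N := fun d N => norm_nonneg _
  have hGle : ∀ d N, G d N ≤ (N:ℝ) * B ^ 2 := by
    intro d N
    have := vdc_norm_sum_Ioc_le (fun n => (⟪x (n + d), x n⟫_ℂ : ℂ))
      (fun n => hinner _ _) 0 N
    simpa using this
  have hgle : ∀ d N, g d N ≤ B ^ 2 := by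
    intro d N
    rw [hgG]
    rcases Nat.eq_zero_or_pos N with h0 | hpos
    · subst h0; simp; positivity
    · have hNR : (0:ℝ) < N := by exact_mod_cast hpos
      calc (N:ℝ)⁻¹ * G d N ≤ (N:ℝ)⁻¹ * ((N:ℝ) * B ^ 2) := by
            gcongr; exact hGle d N
        _ = B ^ 2 := by field_simp
  -- F symmetric pair sums
  set F : ℕ → ℕ → ℕ → ℝ :=
    fun h h' N => ‖∑ n ∈ Finset.Ioc 0 N, ⟪x (n + h), x (n + h')⟫_ℂ‖ with hFdef
  have hFsymm : ∀ h h' N, F h h' N = F h' h N := by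
    intro h h' N
    rw [hFdef]
    simp only
    rw [show (∑ n ∈ Finset.Ioc 0 N, ⟪x (n + h), x (n + h')⟫_ℂ)
        = (starRingEnd ℂ) (∑ n ∈ Finset.Ioc 0 N, ⟪x (n + h'), x (n + h)⟫_ℂ) by
      rw [map_sum]; exact Finset.sum_congr rfl fun n _ => (inner_conj_symm _ _).symm]
    exact RCLike.norm_conj _
  have hFle : ∀ h h' N, F h h' N ≤ (N:ℝ) * B ^ 2 := by
    intro h h' N
    have := vdc_norm_sum_Ioc_le (fun n => (⟪x (n + h), x (n + h')⟫_ℂ : ℂ))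
      (fun n => hinner _ _) 0 N
    simpa [hFdef] using this
  have pair_le : ∀ h' h N : ℕ, h' ≤ h →
      F h h' N ≤ G (h - h') N + 2 * (h':ℝ) * B ^ 2 := by
    intro h' h N hle
    set q : ℕ → ℂ := fun m => ⟪x (m + (h - h')), x m⟫_ℂ with hqdef
    have hqB : ∀ m, ‖q m‖ ≤ B ^ 2 := fun m => hinner _ _
    have hq : ∀ n, ⟪x (n + h), x (n + h')⟫_ℂ = q (n + h') := by
      intro n
      rw [hqdef]
      have : n + h' + (h - h') = n + h := by omega
      simp only [this]
    have hGq : G (h - h') N = ‖∑ n ∈ Finset.Ioc 0 N, q n‖ := rfl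
    calc F h h' N = ‖∑ n ∈ Finset.Ioc 0 N, q (n + h')‖ := by
          rw [hFdef]; simp only; rw [Finset.sum_congr rfl fun n _ => hq n]
      _ = ‖((∑ n ∈ Finset.Ioc 0 N, q (n + h')) - ∑ n ∈ Finset.Ioc 0 N, q n)
            + ∑ n ∈ Finset.Ioc 0 N, q n‖ := by rw [sub_add_cancel]
      _ ≤ ‖(∑ n ∈ Finset.Ioc 0 N, q (n + h')) - ∑ n ∈ Finset.Ioc 0 N, q n‖
            + ‖∑ n ∈ Finset.Ioc 0 N, q n‖ := norm_add_le _ _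
      _ ≤ 2 * (h':ℝ) * B ^ 2 + G (h - h') N := by
          rw [hGq]; gcongr; exact vdc_shift_diff q hqB h' N
      _ = G (h - h') N + 2 * (h':ℝ) * B ^ 2 := by ring
  -- the core finite inequality
  have core : ∀ K N : ℕ, 0 < K → 0 < N → ∃ r : ℝ, 0 ≤ r ∧
      ‖(N:ℝ)⁻¹ • ∑ n ∈ Finset.Ioc 0 N, x n‖ ≤ r + 2*(K:ℝ)*B/(N:ℝ) ∧
      r^2 ≤ B^2/(K:ℝ) + 2*(K:ℝ)*B^2/(N:ℝ)
        + 2*(∑ j ∈ Finset.range (K-1), G (j+1) N)/((N:ℝ)*(K:ℝ)) := by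
    intro K N hK hN
    have hKR : (0:ℝ) < K := by exact_mod_cast hK
    have hNR : (0:ℝ) < N := by exact_mod_cast hN
    set S : H := ∑ n ∈ Finset.Ioc 0 N, x n with hSdef
    set U : H := ∑ n ∈ Finset.Ioc 0 N, ∑ h ∈ Finset.range K, x (n + h) with hUdef
    set Msum : ℝ := ∑ j ∈ Finset.range (K-1), G (j+1) N with hMdef
    refine ⟨(N:ℝ)⁻¹ * ((K:ℝ)⁻¹ * ‖U‖), by positivity, ?_, ?_⟩
    · -- part 1
      have hKS : ‖(K:ℝ) • S - U‖ ≤ 2*(K:ℝ)^2*B := by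
        have hU' : U = ∑ h ∈ Finset.range K, ∑ n ∈ Finset.Ioc 0 N, x (n + h) :=
          Finset.sum_comm
        have hKS' : (K:ℝ) • S = ∑ _h ∈ Finset.range K, S := by
          rw [Finset.sum_const, Finset.card_range, Nat.cast_smul_eq_nsmul]
        rw [hKS', hU', ← Finset.sum_sub_distrib]
        calc ‖∑ h ∈ Finset.range K, (S - ∑ n ∈ Finset.Ioc 0 N, x (n + h))‖
            ≤ ∑ h ∈ Finset.range K, ‖S - ∑ n ∈ Finset.Ioc 0 N, x (n + h)‖ :=
              norm_sum_le _ _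
          _ ≤ ∑ h ∈ Finset.range K, 2*(K:ℝ)*B := by
              refine Finset.sum_le_sum fun h hh => ?_
              rw [norm_sub_rev]
              refine (vdc_shift_diff x hxB h N).trans ?_
              have : (h:ℝ) ≤ (K:ℝ) := by
                exact_mod_cast (Finset.mem_range.1 hh).le
              nlinarith
          _ = 2*(K:ℝ)^2*B := by
              rw [Finset.sum_const, Finset.card_range, nsmul_eq_mul]; ring
      have hS : ‖S‖ ≤ (K:ℝ)⁻¹ * ‖U‖ + 2*(K:ℝ)*B := by
        have hKne : (K:ℝ) ≠ 0 := ne_of_gt hKR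
        calc ‖S‖ = ‖(K:ℝ)⁻¹ • ((K:ℝ) • S - U) + (K:ℝ)⁻¹ • U‖ := by
              rw [smul_sub, sub_add_cancel, smul_smul, inv_mul_cancel₀ hKne, one_smul]
          _ ≤ ‖(K:ℝ)⁻¹ • ((K:ℝ) • S - U)‖ + ‖(K:ℝ)⁻¹ • U‖ := norm_add_le _ _
          _ = (K:ℝ)⁻¹ * ‖(K:ℝ) • S - U‖ + (K:ℝ)⁻¹ * ‖U‖ := by
              rw [norm_smul, norm_smul, Real.norm_eq_abs,
                abs_of_nonneg (by positivity : (0:ℝ) ≤ (K:ℝ)⁻¹)]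
          _ ≤ (K:ℝ)⁻¹ * (2*(K:ℝ)^2*B) + (K:ℝ)⁻¹ * ‖U‖ := by
              gcongr
          _ = (K:ℝ)⁻¹ * ‖U‖ + 2*(K:ℝ)*B := by field_simp; ring
      calc ‖(N:ℝ)⁻¹ • S‖ = (N:ℝ)⁻¹ * ‖S‖ := by
            rw [norm_smul, Real.norm_eq_abs,
              abs_of_nonneg (by positivity : (0:ℝ) ≤ (N:ℝ)⁻¹)]
        _ ≤ (N:ℝ)⁻¹ * ((K:ℝ)⁻¹ * ‖U‖ + 2*(K:ℝ)*B) := by gcongr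
        _ = (N:ℝ)⁻¹ * ((K:ℝ)⁻¹ * ‖U‖) + 2*(K:ℝ)*B/(N:ℝ) := by ring
    · -- part 2
      have s1 : ‖U‖^2 ≤ (N:ℝ) * ∑ n ∈ Finset.Ioc 0 N,
          ‖∑ h ∈ Finset.range K, x (n + h)‖^2 := by
        calc ‖U‖^2 ≤ (∑ n ∈ Finset.Ioc 0 N, ‖∑ h ∈ Finset.range K, x (n + h)‖)^2 := by
              have := norm_sum_le (Finset.Ioc 0 N)
                (fun n => ∑ h ∈ Finset.range K, x (n + h))
              exact pow_le_pow_left₀ (norm_nonneg _) this 2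
          _ ≤ (Finset.Ioc 0 N).card * ∑ n ∈ Finset.Ioc 0 N,
                ‖∑ h ∈ Finset.range K, x (n + h)‖^2 := sq_sum_le_card_mul_sum_sq
          _ = (N:ℝ) * ∑ n ∈ Finset.Ioc 0 N,
                ‖∑ h ∈ Finset.range K, x (n + h)‖^2 := by
              rw [Nat.card_Ioc]; norm_num
      have s2 : ∀ n : ℕ, ‖∑ h ∈ Finset.range K, x (n + h)‖^2
          = ∑ h ∈ Finset.range K, ∑ h' ∈ Finset.range K,
              RCLike.re (⟪x (n + h), x (n + h')⟫_ℂ) := by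
        intro n
        rw [norm_sq_eq_re_inner (𝕜 := ℂ), sum_inner, map_sum]
        refine Finset.sum_congr rfl fun h _ => ?_
        rw [inner_sum, map_sum]
      have s3 : (∑ n ∈ Finset.Ioc 0 N, ∑ h ∈ Finset.range K, ∑ h' ∈ Finset.range K,
            RCLike.re (⟪x (n + h), x (n + h')⟫_ℂ))
          = ∑ h ∈ Finset.range K, ∑ h' ∈ Finset.range K,
              RCLike.re (∑ n ∈ Finset.Ioc 0 N, ⟪x (n + h), x (n + h')⟫_ℂ) := by
        rw [Finset.sum_comm]
        refine Finset.sum_congr rfl fun h _ => ?_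
        rw [Finset.sum_comm]
        refine Finset.sum_congr rfl fun h' _ => ?_
        rw [map_sum]
      have count : ∀ h ∈ Finset.range K,
          (∑ h' ∈ (Finset.range K).erase h,
            (if h' < h then G (h - h') N else G (h' - h) N)) ≤ 2 * Msum := by
        intro h hh
        have hhK : h < K := Finset.mem_range.1 hh
        have hsplit : (Finset.range K).erase h
            = Finset.range h ∪ Finset.Ico (h+1) K := by
          ext m
          simp only [Finset.mem_erase, Finset.mem_range, Finset.mem_union,
            Finset.mem_Ico]
          omega
        have hdisj : Disjoint (Finset.range h) (Finset.Ico (h+1) K) := by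
          simp only [Finset.disjoint_left, Finset.mem_range, Finset.mem_Ico]
          omega
        rw [hsplit, Finset.sum_union hdisj]
        have part1 : (∑ h' ∈ Finset.range h,
            (if h' < h then G (h - h') N else G (h' - h) N)) ≤ Msum := by
          have e : (∑ h' ∈ Finset.range h,
              (if h' < h then G (h - h') N else G (h' - h) N))
              = ∑ j ∈ Finset.range h, G (j+1) N := by
            rw [← Finset.sum_range_reflect (fun j => G (j+1) N) h]
            refine Finset.sum_congr rfl fun j hj => ?_
            have hj' : j < h := Finset.mem_range.1 hj
            rw [if_pos hj']
            have harg : h - j = (h - 1 - j) + 1 := by omega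
            rw [harg]
          rw [e, hMdef]
          refine Finset.sum_le_sum_of_subset_of_nonneg ?_ (fun j _ _ => hGnn _ _)
          exact Finset.range_subset_range.2 (by omega)
        have part2 : (∑ h' ∈ Finset.Ico (h+1) K,
            (if h' < h then G (h - h') N else G (h' - h) N)) ≤ Msum := by
          have e : (∑ h' ∈ Finset.Ico (h+1) K,
              (if h' < h then G (h - h') N else G (h' - h) N))
              = ∑ i ∈ Finset.range (K - (h+1)), G (i+1) N := by
            rw [Finset.sum_Ico_eq_sum_range]
            refine Finset.sum_congr rfl fun i _ => ?_
            rw [if_neg (by omega)]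
            have harg : h + 1 + i - h = i + 1 := by omega
            rw [harg]
          rw [e, hMdef]
          refine Finset.sum_le_sum_of_subset_of_nonneg ?_ (fun j _ _ => hGnn _ _)
          exact Finset.range_subset_range.2 (by omega)
        linarith
      have s4 : ∀ h ∈ Finset.range K,
          (∑ h' ∈ Finset.range K,
            RCLike.re (∑ n ∈ Finset.Ioc 0 N, ⟪x (n + h), x (n + h')⟫_ℂ))
          ≤ (N:ℝ)*B^2 + 2*Msum + 2*(K:ℝ)^2*B^2 := by
        intro h hh
        rw [← Finset.add_sum_erase _ _ hh]
        have diag : RCLike.re (∑ n ∈ Finset.Ioc 0 N, ⟪x (n + h), x (n + h)⟫_ℂ)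
            ≤ (N:ℝ)*B^2 := (RCLike.re_le_norm _).trans (hFle h h N)
        have offdiag : ∀ h' ∈ (Finset.range K).erase h,
            RCLike.re (∑ n ∈ Finset.Ioc 0 N, ⟪x (n + h), x (n + h')⟫_ℂ)
            ≤ (if h' < h then G (h - h') N else G (h' - h) N) + 2*(K:ℝ)*B^2 := by
          intro h' hh'
          have hne : h' ≠ h := (Finset.mem_erase.1 hh').1
          have hh'K : h' < K := Finset.mem_range.1 (Finset.mem_erase.1 hh').2
          refine (RCLike.re_le_norm _).trans ?_
          by_cases hlt : h' < h
          · rw [if_pos hlt]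
            refine (pair_le h' h N hlt.le).trans ?_
            have : (h':ℝ) ≤ (K:ℝ) := by exact_mod_cast hh'K.le
            nlinarith [sq_nonneg B]
          · rw [if_neg hlt]
            push_neg at hlt
            have h2 : F h h' N ≤ G (h' - h) N + 2 * (h:ℝ) * B ^ 2 := by
              rw [hFsymm h h' N]; exact pair_le h h' N hlt
            refine h2.trans ?_
            have : (h:ℝ) ≤ (K:ℝ) := by
              exact_mod_cast (Finset.mem_range.1 hh).le
            nlinarith [sq_nonneg B]
        calc RCLike.re (∑ n ∈ Finset.Ioc 0 N, ⟪x (n + h), x (n + h)⟫_ℂ)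
              + ∑ h' ∈ (Finset.range K).erase h,
                RCLike.re (∑ n ∈ Finset.Ioc 0 N, ⟪x (n + h), x (n + h')⟫_ℂ)
            ≤ (N:ℝ)*B^2 + ∑ h' ∈ (Finset.range K).erase h,
                ((if h' < h then G (h - h') N else G (h' - h) N) + 2*(K:ℝ)*B^2) := by
              exact add_le_add diag (Finset.sum_le_sum offdiag)
          _ = (N:ℝ)*B^2 + (∑ h' ∈ (Finset.range K).erase h,
                (if h' < h then G (h - h') N else G (h' - h) N))
              + ((Finset.range K).erase h).card * (2*(K:ℝ)*B^2) := by
              rw [Finset.sum_add_distrib, Finset.sum_const, nsmul_eq_mul]; ring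
          _ ≤ (N:ℝ)*B^2 + 2*Msum + (K:ℝ) * (2*(K:ℝ)*B^2) := by
              have c1 := count h hh
              have c2 : (((Finset.range K).erase h).card : ℝ) ≤ (K:ℝ) := by
                have := Finset.card_erase_le (s := Finset.range K) (a := h)
                rw [Finset.card_range] at this
                exact_mod_cast this
              have c3 : (((Finset.range K).erase h).card : ℝ) * (2*(K:ℝ)*B^2)
                  ≤ (K:ℝ) * (2*(K:ℝ)*B^2) :=
                mul_le_mul_of_nonneg_right c2 (by positivity)
              linarith
          _ = (N:ℝ)*B^2 + 2*Msum + 2*(K:ℝ)^2*B^2 := by ring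
      have s5 : ‖U‖^2 ≤ (N:ℝ) * ((K:ℝ) * ((N:ℝ)*B^2 + 2*Msum + 2*(K:ℝ)^2*B^2)) := by
        refine s1.trans ?_
        gcongr (N:ℝ) * ?_
        calc (∑ n ∈ Finset.Ioc 0 N, ‖∑ h ∈ Finset.range K, x (n + h)‖^2)
            = ∑ n ∈ Finset.Ioc 0 N, ∑ h ∈ Finset.range K, ∑ h' ∈ Finset.range K,
                RCLike.re (⟪x (n + h), x (n + h')⟫_ℂ) :=
              Finset.sum_congr rfl fun n _ => s2 n
          _ = ∑ h ∈ Finset.range K, ∑ h' ∈ Finset.range K,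
                RCLike.re (∑ n ∈ Finset.Ioc 0 N, ⟪x (n + h), x (n + h')⟫_ℂ) := s3
          _ ≤ ∑ _h ∈ Finset.range K, ((N:ℝ)*B^2 + 2*Msum + 2*(K:ℝ)^2*B^2) :=
              Finset.sum_le_sum s4
          _ = (K:ℝ) * ((N:ℝ)*B^2 + 2*Msum + 2*(K:ℝ)^2*B^2) := by
              rw [Finset.sum_const, Finset.card_range, nsmul_eq_mul]
      calc ((N:ℝ)⁻¹ * ((K:ℝ)⁻¹ * ‖U‖))^2
          = (N:ℝ)⁻¹^2 * (K:ℝ)⁻¹^2 * ‖U‖^2 := by ring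
        _ ≤ (N:ℝ)⁻¹^2 * (K:ℝ)⁻¹^2
            * ((N:ℝ) * ((K:ℝ) * ((N:ℝ)*B^2 + 2*Msum + 2*(K:ℝ)^2*B^2))) := by
            gcongr
        _ = B^2/(K:ℝ) + 2*(K:ℝ)*B^2/(N:ℝ) + 2*Msum/((N:ℝ)*(K:ℝ)) := by
            field_simp
            ring
    -- final stage
  have hyp2 : Tendsto (fun h : ℕ => limsup (fun N => g h N) atTop) atTop (nhds 0) := hyp
  simp only [hIcc]
  rw [Metric.tendsto_nhds]
  intro ε hε
  set δ : ℝ := ε^2/64 with hδdef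
  have hδ : 0 < δ := by positivity
  obtain ⟨D, hD⟩ := eventually_atTop.1 (hyp2.eventually_lt_const hδ)
  obtain ⟨K, hKgt⟩ := exists_nat_gt ((2*(D:ℝ)*B^2 + B^2)/δ)
  have hKR : (0:ℝ) < K := lt_of_le_of_lt (by positivity) hKgt
  have hK : 0 < K := by exact_mod_cast hKR
  have hKδ : 2*(D:ℝ)*B^2 + B^2 < (K:ℝ)*δ := by
    rw [div_lt_iff₀ hδ] at hKgt; linarith
  have E2 : ∀ᶠ N : ℕ in atTop, ∀ j ∈ Finset.range (K-1), D ≤ j+1 → g (j+1) N < δ := by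
    rw [eventually_all_finset]
    intro j _hj
    by_cases hDj : D ≤ j+1
    · filter_upwards [eventually_lt_of_limsup_lt (hD (j+1) hDj)
        (isBoundedUnder_of ⟨B^2, fun N => hgle (j+1) N⟩)] with N hN _
      exact hN
    · filter_upwards with N hDj'
      exact absurd hDj' hDj
  have E3 : ∀ᶠ N : ℕ in atTop, 2*(K:ℝ)*B^2/(N:ℝ) < δ :=
    (tendsto_const_div_atTop_nhds_zero_nat (2*(K:ℝ)*B^2)).eventually_lt_const hδ
  have E4 : ∀ᶠ N : ℕ in atTop, 2*(K:ℝ)*B/(N:ℝ) < ε/2 :=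
    (tendsto_const_div_atTop_nhds_zero_nat (2*(K:ℝ)*B)).eventually_lt_const
      (by positivity)
  filter_upwards [E2, E3, E4, eventually_ge_atTop 1] with N hN2 hN3 hN4 hN1
  have hNpos : 0 < N := hN1
  have hNR : (0:ℝ) < N := by exact_mod_cast hNpos
  obtain ⟨r, hr0, hr1, hr2⟩ := core K N hK hNpos
  have hterm : ∀ j ∈ Finset.range (K-1),
      G (j+1) N ≤ (N:ℝ)*δ + (if j < D then (N:ℝ)*B^2 else 0) := by
    intro j hj
    by_cases hDj : D ≤ j + 1
    · have hg := hN2 j hj hDj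
      have hG : G (j+1) N = (N:ℝ) * g (j+1) N := by
        rw [hgG, ← mul_assoc, mul_inv_cancel₀ (ne_of_gt hNR), one_mul]
      have h1 : G (j+1) N ≤ (N:ℝ)*δ := by
        rw [hG]; exact mul_le_mul_of_nonneg_left hg.le (le_of_lt hNR)
      have h2 : (0:ℝ) ≤ (if j < D then (N:ℝ)*B^2 else 0) := by
        split_ifs <;> positivity
      linarith
    · have hjD : j < D := by omega
      rw [if_pos hjD]
      have h1 := hGle (j+1) N
      have h2 : (0:ℝ) ≤ (N:ℝ)*δ := by positivity
      linarith
  have hite : (∑ j ∈ Finset.range (K-1), (if j < D then (N:ℝ)*B^2 else 0))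
      ≤ (D:ℝ)*((N:ℝ)*B^2) := by
    rw [← Finset.sum_filter]
    have hcard : (Finset.filter (fun j => j < D) (Finset.range (K-1))).card ≤ D := by
      refine le_trans (Finset.card_le_card ?_) (le_of_eq (Finset.card_range D))
      intro m hm
      simp only [Finset.mem_filter, Finset.mem_range] at hm ⊢
      exact hm.2
    rw [Finset.sum_const, nsmul_eq_mul]
    have : ((Finset.filter (fun j => j < D) (Finset.range (K-1))).card : ℝ) ≤ (D:ℝ) := by
      exact_mod_cast hcard
    exact mul_le_mul_of_nonneg_right this (by positivity)
  have hMb : (∑ j ∈ Finset.range (K-1), G (j+1) N)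
      ≤ (D:ℝ)*((N:ℝ)*B^2) + (K:ℝ)*((N:ℝ)*δ) := by
    calc (∑ j ∈ Finset.range (K-1), G (j+1) N)
        ≤ ∑ j ∈ Finset.range (K-1), ((N:ℝ)*δ + if j < D then (N:ℝ)*B^2 else 0) :=
          Finset.sum_le_sum hterm
      _ = ((K-1:ℕ):ℝ)*((N:ℝ)*δ)
          + ∑ j ∈ Finset.range (K-1), (if j < D then (N:ℝ)*B^2 else 0) := by
          rw [Finset.sum_add_distrib, Finset.sum_const, Finset.card_range, nsmul_eq_mul]
      _ ≤ (K:ℝ)*((N:ℝ)*δ) + (D:ℝ)*((N:ℝ)*B^2) := by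
          have hc : ((K-1:ℕ):ℝ) ≤ (K:ℝ) := by
            exact_mod_cast Nat.sub_le K 1
          have := mul_le_mul_of_nonneg_right hc
            (show (0:ℝ) ≤ (N:ℝ)*δ by positivity)
          linarith [hite]
      _ = (D:ℝ)*((N:ℝ)*B^2) + (K:ℝ)*((N:ℝ)*δ) := by ring
  have h2M : 2*(∑ j ∈ Finset.range (K-1), G (j+1) N)/((N:ℝ)*(K:ℝ))
      ≤ 2*(D:ℝ)*B^2/(K:ℝ) + 2*δ := by
    have step : 2*(∑ j ∈ Finset.range (K-1), G (j+1) N)/((N:ℝ)*(K:ℝ))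
        ≤ 2*((D:ℝ)*((N:ℝ)*B^2) + (K:ℝ)*((N:ℝ)*δ))/((N:ℝ)*(K:ℝ)) := by
      gcongr
    refine step.trans (le_of_eq ?_)
    field_simp
  have hX1 : B^2/(K:ℝ) < δ := by
    rw [div_lt_iff₀ hKR]
    nlinarith [mul_nonneg (Nat.cast_nonneg (α := ℝ) D) (sq_nonneg B)]
  have hX3 : 2*(D:ℝ)*B^2/(K:ℝ) < δ := by
    rw [div_lt_iff₀ hKR]
    nlinarith [sq_nonneg B]
  have hr2' : r^2 < 5*δ := by linarith
  have hsq : r^2 < (ε/2)^2 := by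
    have : (ε/2)^2 = ε^2/4 := by ring
    rw [this, hδdef] at *
    linarith
  have hrε : r < ε/2 := lt_of_pow_lt_pow_left₀ 2 (by positivity) hsq
  rw [Real.dist_eq, sub_zero, abs_of_nonneg (norm_nonneg _)]
  calc ‖(N:ℝ)⁻¹ • ∑ n ∈ Finset.Ioc 0 N, x n‖ ≤ r + 2*(K:ℝ)*B/(N:ℝ) := hr1
    _ < ε/2 + ε/2 := add_lt_add hrε hN4
    _ = ε := add_halves ε
end

section
/- Let H be a Hilbert space and (x_n) a bounded sequence in H. If lim_{H→∞} (1/H)∑_{h=1}^H limsup_{N→∞} |(1/N)∑_{n=1}^N ⟨x_{n+h}, x_n⟩| = 0, then ‖(1/N)∑_{n=1}^N x_n‖ → 0 as N → ∞. -/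
open Filter Finset
open scoped InnerProductSpace

section vdcAux

variable {E : Type*} [SeminormedAddCommGroup E]

lemma vdc_sum_sdiff (s t : Finset ℕ) (f : ℕ → E) (C : ℝ) (hC : ∀ i, ‖f i‖ ≤ C) :
    ‖∑ i ∈ s, f i - ∑ i ∈ t, f i‖ ≤ C * ((s \ t).card + (t \ s).card) := by
  classical
  have key : ∀ u : Finset ℕ, ‖∑ i ∈ u, f i‖ ≤ C * u.card := by
    intro u
    calc ‖∑ i ∈ u, f i‖ ≤ ∑ i ∈ u, ‖f i‖ := norm_sum_le _ _
      _ ≤ u.card • C := Finset.sum_le_card_nsmul _ _ _ (fun i _ => hC i)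
      _ = C * u.card := by rw [nsmul_eq_mul]; ring
  have h1 : ∑ i ∈ s, f i - ∑ i ∈ t, f i = ∑ i ∈ s \ t, f i - ∑ i ∈ t \ s, f i := by
    rw [← Finset.sum_inter_add_sum_sdiff s t f, ← Finset.sum_inter_add_sum_sdiff t s f,
      Finset.inter_comm]
    abel
  rw [h1]
  calc ‖∑ i ∈ s \ t, f i - ∑ i ∈ t \ s, f i‖
      ≤ ‖∑ i ∈ s \ t, f i‖ + ‖∑ i ∈ t \ s, f i‖ := norm_sub_le _ _
    _ ≤ C * (s \ t).card + C * (t \ s).card := add_le_add (key _) (key _)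
    _ = C * ((s \ t).card + (t \ s).card) := by ring

lemma vdc_shift_sum (f : ℕ → E) (N h : ℕ) :
    ∑ n ∈ Icc 1 N, f (n + h) = ∑ m ∈ Icc (1 + h) (N + h), f m := by
  rw [← Finset.map_add_right_Icc, Finset.sum_map]
  rfl

lemma vdc_shift (f : ℕ → E) (C : ℝ) (hC : ∀ i, ‖f i‖ ≤ C) (N h : ℕ) :
    ‖∑ n ∈ Icc 1 N, f n - ∑ n ∈ Icc 1 N, f (n + h)‖ ≤ C * (2 * h) := by
  have hC0 : 0 ≤ C := (norm_nonneg _).trans (hC 0)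
  rw [vdc_shift_sum]
  refine (vdc_sum_sdiff _ _ f C hC).trans ?_
  have h1 : (Icc 1 N \ Icc (1 + h) (N + h)) ⊆ Icc 1 h := by
    intro n hn
    simp only [Finset.mem_sdiff, Finset.mem_Icc, not_and, not_le] at hn ⊢
    omega
  have h2 : (Icc (1 + h) (N + h) \ Icc 1 N) ⊆ Icc (N + 1) (N + h) := by
    intro n hn
    simp only [Finset.mem_sdiff, Finset.mem_Icc, not_and, not_le] at hn ⊢
    omega
  have c1 := Finset.card_le_card h1
  have c2 := Finset.card_le_card h2
  rw [Nat.card_Icc] at c1 c2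
  have hc : ((Icc 1 N \ Icc (1 + h) (N + h)).card + (Icc (1 + h) (N + h) \ Icc 1 N).card : ℝ)
      ≤ 2 * h := by
    have : (Icc 1 N \ Icc (1 + h) (N + h)).card + (Icc (1 + h) (N + h) \ Icc 1 N).card
        ≤ 2 * h := by omega
    exact_mod_cast this
  exact mul_le_mul_of_nonneg_left hc hC0

lemma vdc_row (Tn : ℕ → ℝ) (hTn : ∀ d, 0 ≤ Tn d) (Hh h : ℕ) (h1 : 1 ≤ h) (h2 : h ≤ Hh) :
    ∑ h' ∈ Icc 1 Hh, Tn ((h - h') + (h' - h))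
      ≤ 2 * ∑ d ∈ Icc 1 Hh, Tn d + Tn 0 := by
  have hsplit : (Icc 1 Hh) = (Icc 1 (h-1) ∪ {h}) ∪ Icc (h+1) Hh := by
    ext n; simp only [Finset.mem_Icc, Finset.mem_union, Finset.mem_singleton]; omega
  have d1 : Disjoint (Icc 1 (h-1) ∪ {h}) (Icc (h+1) Hh) := by
    rw [Finset.disjoint_left]
    intro n hn hn'
    simp only [Finset.mem_Icc, Finset.mem_union, Finset.mem_singleton] at hn hn'
    omega
  have d2 : Disjoint (Icc 1 (h-1)) ({h} : Finset ℕ) := by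
    rw [Finset.disjoint_left]
    intro n hn hn'
    simp only [Finset.mem_Icc, Finset.mem_singleton] at hn hn'
    omega
  set τ := ∑ d ∈ Icc 1 Hh, Tn d with hτ
  rw [hsplit, Finset.sum_union d1, Finset.sum_union d2, Finset.sum_singleton]
  have P2 : Tn ((h - h) + (h - h)) = Tn 0 := by norm_num
  have P1 : ∑ h' ∈ Icc 1 (h-1), Tn ((h - h') + (h' - h)) ≤ τ := by
    have e : ∑ h' ∈ Icc 1 (h-1), Tn ((h - h') + (h' - h)) = ∑ d ∈ Icc 1 (h-1), Tn d := by
      refine Finset.sum_nbij' (fun h' => h - h') (fun d => h - d) ?_ ?_ ?_ ?_ ?_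
      all_goals intro a ha; simp only [Finset.mem_Icc] at ha ⊢
      · omega
      · omega
      · omega
      · omega
      · congr 1; omega
    rw [e, hτ]
    refine Finset.sum_le_sum_of_subset_of_nonneg ?_ (fun i _ _ => hTn i)
    exact Finset.Icc_subset_Icc_right (by omega)
  have P3 : ∑ h' ∈ Icc (h+1) Hh, Tn ((h - h') + (h' - h)) ≤ τ := by
    have e : ∑ h' ∈ Icc (h+1) Hh, Tn ((h - h') + (h' - h)) = ∑ d ∈ Icc 1 (Hh-h), Tn d := by
      refine Finset.sum_nbij' (fun h' => h' - h) (fun d => d + h) ?_ ?_ ?_ ?_ ?_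
      all_goals intro a ha; simp only [Finset.mem_Icc] at ha ⊢
      · omega
      · omega
      · omega
      · omega
      · congr 1; omega
    rw [e, hτ]
    refine Finset.sum_le_sum_of_subset_of_nonneg ?_ (fun i _ _ => hTn i)
    exact Finset.Icc_subset_Icc_right (by omega)
  rw [P2]
  linarith

end vdcAux

section vdcInner

variable {H : Type*} [NormedAddCommGroup H] [InnerProductSpace ℂ H]

lemma vdc_inner_shift_le (x : ℕ → H) (C : ℝ) (hC : ∀ n, ‖x n‖ ≤ C) (N h h' : ℕ)
    (hle : h' ≤ h) :
    ‖∑ n ∈ Icc 1 N, ⟪x (n + h), x (n + h')⟫_ℂ‖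
      ≤ ‖∑ n ∈ Icc 1 N, ⟪x (n + (h - h')), x n⟫_ℂ‖ + C ^ 2 * (2 * h') := by
  have hC0 : 0 ≤ C := (norm_nonneg _).trans (hC 0)
  set d := h - h' with hd
  set φ : ℕ → ℂ := fun m => ⟪x (m + d), x m⟫_ℂ with hφdef
  have hφ : ∀ m, ‖φ m‖ ≤ C ^ 2 := by
    intro m
    calc ‖φ m‖ ≤ ‖x (m + d)‖ * ‖x m‖ := norm_inner_le_norm _ _
      _ ≤ C * C := mul_le_mul (hC _) (hC _) (norm_nonneg _) hC0
      _ = C ^ 2 := (sq C).symm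
  have hsum : ∑ n ∈ Icc 1 N, ⟪x (n + h), x (n + h')⟫_ℂ = ∑ n ∈ Icc 1 N, φ (n + h') := by
    refine Finset.sum_congr rfl fun n _ => ?_
    have : n + h' + d = n + h := by omega
    simp only [hφdef, this]
  rw [hsum]
  have h2 := vdc_shift φ (C ^ 2) hφ N h'
  have h3 : ‖∑ n ∈ Icc 1 N, φ (n + h')‖ - ‖∑ n ∈ Icc 1 N, φ n‖
      ≤ ‖∑ n ∈ Icc 1 N, φ n - ∑ n ∈ Icc 1 N, φ (n + h')‖ := by
    rw [norm_sub_rev]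
    exact norm_sub_norm_le _ _
  have : ‖∑ n ∈ Icc 1 N, φ n‖ = ‖∑ n ∈ Icc 1 N, ⟪x (n + (h - h')), x n⟫_ℂ‖ := rfl
  linarith

lemma vdc_inner_re_le (x : ℕ → H) (C : ℝ) (hC : ∀ n, ‖x n‖ ≤ C) (N h h' : ℕ) :
    (∑ n ∈ Icc 1 N, ⟪x (n + h), x (n + h')⟫_ℂ).re
      ≤ ‖∑ n ∈ Icc 1 N, ⟪x (n + ((h - h') + (h' - h))), x n⟫_ℂ‖ + C ^ 2 * (2 * min h h') := by
  rcases le_total h' h with hle | hle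
  · have := vdc_inner_shift_le x C hC N h h' hle
    have hre : (∑ n ∈ Icc 1 N, ⟪x (n + h), x (n + h')⟫_ℂ).re
        ≤ ‖∑ n ∈ Icc 1 N, ⟪x (n + h), x (n + h')⟫_ℂ‖ := Complex.re_le_norm _
    have e1 : (h - h') + (h' - h) = h - h' := by omega
    have e2 : min h h' = h' := by omega
    rw [e1, e2]
    linarith
  · have := vdc_inner_shift_le x C hC N h' h hle
    have hconj : ∑ n ∈ Icc 1 N, ⟪x (n + h), x (n + h')⟫_ℂ
        = (starRingEnd ℂ) (∑ n ∈ Icc 1 N, ⟪x (n + h'), x (n + h)⟫_ℂ) := by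
      rw [map_sum]
      exact Finset.sum_congr rfl fun n _ => (inner_conj_symm _ _).symm
    have hre : (∑ n ∈ Icc 1 N, ⟪x (n + h), x (n + h')⟫_ℂ).re
        ≤ ‖∑ n ∈ Icc 1 N, ⟪x (n + h'), x (n + h)⟫_ℂ‖ := by
      rw [hconj]
      refine (Complex.re_le_norm _).trans ?_
      rw [Complex.norm_conj]
    have e1 : (h - h') + (h' - h) = h' - h := by omega
    have e2 : min h h' = h := by omega
    rw [e1, e2]
    linarith

set_option maxHeartbeats 2000000 in
lemma vdc_main_ineq (x : ℕ → H) (C : ℝ) (hC : ∀ n, ‖x n‖ ≤ C) (N Hh : ℕ)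
    (hN : 1 ≤ N) (hH : 1 ≤ Hh) :
    ‖((N : ℝ))⁻¹ • ∑ n ∈ Icc 1 N, x n‖ ^ 2
      ≤ C ^ 2 / Hh
        + (2 / Hh) * ∑ d ∈ Icc 1 Hh,
            ‖((N : ℂ))⁻¹ * ∑ n ∈ Finset.Icc 1 N, ⟪x (n + d), x n⟫_ℂ‖
        + 10 * Hh ^ 2 * C ^ 2 / N := by
  have hC0 : 0 ≤ C := (norm_nonneg _).trans (hC 0)
  have hN0 : (0 : ℝ) < N := by exact_mod_cast hN
  have hH0 : (0 : ℝ) < Hh := by exact_mod_cast hH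
  have hN1 : (1 : ℝ) ≤ N := by exact_mod_cast hN
  have hH1 : (1 : ℝ) ≤ Hh := by exact_mod_cast hH
  set Tn : ℕ → ℝ := fun d => ‖∑ n ∈ Icc 1 N, ⟪x (n + d), x n⟫_ℂ‖ with hTndef
  have hTn0 : ∀ d, 0 ≤ Tn d := fun d => norm_nonneg _
  have hinner : ∀ (a b : ℕ), ‖(⟪x a, x b⟫_ℂ)‖ ≤ C ^ 2 := by
    intro a b
    calc ‖(⟪x a, x b⟫_ℂ)‖ ≤ ‖x a‖ * ‖x b‖ := norm_inner_le_norm _ _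
      _ ≤ C * C := mul_le_mul (hC _) (hC _) (norm_nonneg _) hC0
      _ = C ^ 2 := (sq C).symm
  have hTnN : ∀ d, Tn d ≤ N * C ^ 2 := by
    intro d
    calc Tn d ≤ ∑ n ∈ Icc 1 N, ‖(⟪x (n + d), x n⟫_ℂ)‖ := norm_sum_le _ _
      _ ≤ (Icc 1 N).card • (C ^ 2) := Finset.sum_le_card_nsmul _ _ _ (fun n _ => hinner _ _)
      _ = N * C ^ 2 := by rw [nsmul_eq_mul, Nat.card_Icc]; norm_num
  set τ := ∑ d ∈ Icc 1 Hh, Tn d with hτdef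
  have hτ0 : 0 ≤ τ := Finset.sum_nonneg fun d _ => hTn0 d
  set S := ∑ n ∈ Icc 1 N, x n with hSdef
  set B := ∑ n ∈ Icc 1 N, ∑ h ∈ Icc 1 Hh, x (n + h) with hBdef
  set s := ‖S‖ with hsdef
  set b := ‖B‖ with hbdef
  have hs0 : 0 ≤ s := norm_nonneg _
  have hb0 : 0 ≤ b := norm_nonneg _
  -- F1 : Hh * s ≤ b + 2 * Hh^2 * C
  have F1 : (Hh : ℝ) * s ≤ b + 2 * Hh ^ 2 * C := by
    have hkey : ∑ h ∈ Icc 1 Hh, (S - ∑ n ∈ Icc 1 N, x (n + h)) = (Hh : ℝ) • S - B := by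
      rw [Finset.sum_sub_distrib, Finset.sum_const, Nat.card_Icc, hBdef, Finset.sum_comm]
      simp only [Nat.add_sub_cancel]
      rw [← Nat.cast_smul_eq_nsmul ℝ]
    have hbound : ‖(Hh : ℝ) • S - B‖ ≤ Hh * (C * (2 * Hh)) := by
      rw [← hkey]
      calc ‖∑ h ∈ Icc 1 Hh, (S - ∑ n ∈ Icc 1 N, x (n + h))‖
          ≤ ∑ h ∈ Icc 1 Hh, ‖S - ∑ n ∈ Icc 1 N, x (n + h)‖ := norm_sum_le _ _
        _ ≤ ∑ h ∈ Icc 1 Hh, (C * (2 * Hh)) := by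
            refine Finset.sum_le_sum fun h hh => ?_
            refine (vdc_shift x C hC N h).trans ?_
            have : (h : ℝ) ≤ Hh := by
              have := (Finset.mem_Icc.mp hh).2; exact_mod_cast this
            nlinarith
        _ = (Icc 1 Hh).card * (C * (2 * Hh)) := by rw [Finset.sum_const, nsmul_eq_mul]
        _ = Hh * (C * (2 * Hh)) := by rw [Nat.card_Icc]; norm_num
    have h1 : ‖(Hh : ℝ) • S‖ = Hh * s := by
      rw [norm_smul, Real.norm_natCast]
    have h2 : ‖(Hh : ℝ) • S‖ ≤ b + ‖(Hh : ℝ) • S - B‖ := by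
      have := norm_sub_norm_le ((Hh : ℝ) • S) B
      linarith [le_abs_self (‖(Hh : ℝ) • S‖ - b)]
    nlinarith [h2, hbound, h1]
  -- trivial bound on b
  have bC : b ≤ N * (Hh * C) := by
    calc b ≤ ∑ n ∈ Icc 1 N, ‖∑ h ∈ Icc 1 Hh, x (n + h)‖ := norm_sum_le _ _
      _ ≤ ∑ n ∈ Icc 1 N, (Hh * C) := by
          refine Finset.sum_le_sum fun n _ => ?_
          calc ‖∑ h ∈ Icc 1 Hh, x (n + h)‖ ≤ ∑ h ∈ Icc 1 Hh, ‖x (n + h)‖ := norm_sum_le _ _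
            _ ≤ (Icc 1 Hh).card • C := Finset.sum_le_card_nsmul _ _ _ (fun h _ => hC _)
            _ = Hh * C := by rw [nsmul_eq_mul, Nat.card_Icc]; norm_num
      _ = N * (Hh * C) := by rw [Finset.sum_const, nsmul_eq_mul, Nat.card_Icc]; norm_num
  -- F2 : b^2 ≤ N * Σ_n ‖w n‖^2
  have F2 : b ^ 2 ≤ N * ∑ n ∈ Icc 1 N, ‖∑ h ∈ Icc 1 Hh, x (n + h)‖ ^ 2 := by
    have h1 : b ≤ ∑ n ∈ Icc 1 N, ‖∑ h ∈ Icc 1 Hh, x (n + h)‖ := norm_sum_le _ _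
    have h2 : b ^ 2 ≤ (∑ n ∈ Icc 1 N, ‖∑ h ∈ Icc 1 Hh, x (n + h)‖) ^ 2 :=
      pow_le_pow_left₀ hb0 h1 2
    refine h2.trans ?_
    have h3 := sq_sum_le_card_mul_sum_sq (s := Icc 1 N)
      (f := fun n => ‖∑ h ∈ Icc 1 Hh, x (n + h)‖)
    refine h3.trans ?_
    have : ((Icc 1 N).card : ℝ) = N := by rw [Nat.card_Icc]; norm_num
    rw [this]
  -- F3 : Σ_n ‖w n‖^2 as double sum of real parts
  have F3 : ∑ n ∈ Icc 1 N, ‖∑ h ∈ Icc 1 Hh, x (n + h)‖ ^ 2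
      = ∑ h ∈ Icc 1 Hh, ∑ h' ∈ Icc 1 Hh,
          (∑ n ∈ Icc 1 N, ⟪x (n + h), x (n + h')⟫_ℂ).re := by
    have hterm : ∀ n, ‖∑ h ∈ Icc 1 Hh, x (n + h)‖ ^ 2
        = ∑ h ∈ Icc 1 Hh, ∑ h' ∈ Icc 1 Hh, (⟪x (n + h), x (n + h')⟫_ℂ).re := by
      intro n
      have h1 : ‖∑ h ∈ Icc 1 Hh, x (n + h)‖ ^ 2
          = (⟪∑ h ∈ Icc 1 Hh, x (n + h), ∑ h' ∈ Icc 1 Hh, x (n + h')⟫_ℂ).re := by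
        rw [InnerProductSpace.norm_sq_eq_re_inner (𝕜 := ℂ)]
        rfl
      rw [h1, sum_inner]
      rw [Complex.re_sum]
      refine Finset.sum_congr rfl fun h _ => ?_
      rw [inner_sum, Complex.re_sum]
    calc ∑ n ∈ Icc 1 N, ‖∑ h ∈ Icc 1 Hh, x (n + h)‖ ^ 2
        = ∑ n ∈ Icc 1 N, ∑ h ∈ Icc 1 Hh, ∑ h' ∈ Icc 1 Hh, (⟪x (n + h), x (n + h')⟫_ℂ).re := by
          exact Finset.sum_congr rfl fun n _ => hterm n
      _ = ∑ h ∈ Icc 1 Hh, ∑ n ∈ Icc 1 N, ∑ h' ∈ Icc 1 Hh, (⟪x (n + h), x (n + h')⟫_ℂ).re :=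
          Finset.sum_comm
      _ = ∑ h ∈ Icc 1 Hh, ∑ h' ∈ Icc 1 Hh, ∑ n ∈ Icc 1 N, (⟪x (n + h), x (n + h')⟫_ℂ).re := by
          exact Finset.sum_congr rfl fun h _ => Finset.sum_comm
      _ = ∑ h ∈ Icc 1 Hh, ∑ h' ∈ Icc 1 Hh, (∑ n ∈ Icc 1 N, ⟪x (n + h), x (n + h')⟫_ℂ).re := by
          refine Finset.sum_congr rfl fun h _ => Finset.sum_congr rfl fun h' _ => ?_
          rw [Complex.re_sum]
  -- F4 : double sum bound
  have F4 : ∑ h ∈ Icc 1 Hh, ∑ h' ∈ Icc 1 Hh,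
        (∑ n ∈ Icc 1 N, ⟪x (n + h), x (n + h')⟫_ℂ).re
      ≤ Hh * (2 * τ + N * C ^ 2 + 2 * Hh ^ 2 * C ^ 2) := by
    have hrow : ∀ h ∈ Icc 1 Hh, ∑ h' ∈ Icc 1 Hh,
          (∑ n ∈ Icc 1 N, ⟪x (n + h), x (n + h')⟫_ℂ).re
        ≤ 2 * τ + N * C ^ 2 + 2 * Hh ^ 2 * C ^ 2 := by
      intro h hh
      obtain ⟨hh1, hh2⟩ := Finset.mem_Icc.mp hh
      calc ∑ h' ∈ Icc 1 Hh, (∑ n ∈ Icc 1 N, ⟪x (n + h), x (n + h')⟫_ℂ).re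
          ≤ ∑ h' ∈ Icc 1 Hh, (Tn ((h - h') + (h' - h)) + C ^ 2 * (2 * Hh)) := by
            refine Finset.sum_le_sum fun h' hh' => ?_
            refine (vdc_inner_re_le x C hC N h h').trans ?_
            have heq : ‖∑ n ∈ Icc 1 N, ⟪x (n + (h - h' + (h' - h))), x n⟫_ℂ‖
                = Tn (h - h' + (h' - h)) := rfl
            rw [heq]
            have hm : ((min h h' : ℕ) : ℝ) ≤ (Hh : ℝ) := by
              exact_mod_cast le_trans (min_le_left h h') hh2
            nlinarith [sq_nonneg C]
        _ = ∑ h' ∈ Icc 1 Hh, Tn ((h - h') + (h' - h)) + (Icc 1 Hh).card * (C ^ 2 * (2 * Hh)) := by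
            rw [Finset.sum_add_distrib, Finset.sum_const, nsmul_eq_mul]
        _ ≤ (2 * τ + Tn 0) + Hh * (C ^ 2 * (2 * Hh)) := by
            have h1 := vdc_row Tn hTn0 Hh h hh1 hh2
            have h2 : ((Icc 1 Hh).card : ℝ) = Hh := by rw [Nat.card_Icc]; norm_num
            rw [h2]
            linarith
        _ ≤ 2 * τ + N * C ^ 2 + 2 * Hh ^ 2 * C ^ 2 := by
            have := hTnN 0
            nlinarith
    calc ∑ h ∈ Icc 1 Hh, ∑ h' ∈ Icc 1 Hh, (∑ n ∈ Icc 1 N, ⟪x (n + h), x (n + h')⟫_ℂ).re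
        ≤ ∑ _h ∈ Icc 1 Hh, (2 * τ + N * C ^ 2 + 2 * Hh ^ 2 * C ^ 2) :=
          Finset.sum_le_sum hrow
      _ = (Icc 1 Hh).card * (2 * τ + N * C ^ 2 + 2 * Hh ^ 2 * C ^ 2) := by
          rw [Finset.sum_const, nsmul_eq_mul]
      _ = Hh * (2 * τ + N * C ^ 2 + 2 * Hh ^ 2 * C ^ 2) := by
          rw [Nat.card_Icc]; norm_num
  -- combine F2 F3 F4
  have Q3 : b ^ 2 ≤ N * (Hh * (2 * τ + N * C ^ 2 + 2 * Hh ^ 2 * C ^ 2)) := by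
    rw [F3] at F2
    exact F2.trans (mul_le_mul_of_nonneg_left F4 (le_of_lt hN0))
  -- rewrite the goal
  have hnorm1 : ‖((N : ℝ))⁻¹ • S‖ = (N : ℝ)⁻¹ * s := by
    rw [norm_smul, norm_inv, Real.norm_natCast]
  have hnorm2 : ∑ d ∈ Icc 1 Hh, ‖((N : ℂ))⁻¹ * ∑ n ∈ Finset.Icc 1 N, ⟪x (n + d), x n⟫_ℂ‖
      = (N : ℝ)⁻¹ * τ := by
    rw [hτdef, Finset.mul_sum]
    refine Finset.sum_congr rfl fun d _ => ?_
    rw [norm_mul, norm_inv, Complex.norm_natCast]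
  rw [hnorm1, hnorm2]
  clear_value Tn τ S B s b
  clear hnorm1 hnorm2 F2 F3 F4 hTndef hτdef hSdef hBdef hsdef hbdef hTn0 hinner hTnN hC
  -- final arithmetic
  have Q1 : ((Hh : ℝ) * s) ^ 2 ≤ (b + 2 * Hh ^ 2 * C) ^ 2 :=
    pow_le_pow_left₀ (mul_nonneg (le_of_lt hH0) hs0) F1 2
  have Q4 : 4 * Hh ^ 2 * C * b ≤ 4 * Hh ^ 2 * C * (N * (Hh * C)) := by
    refine mul_le_mul_of_nonneg_left bC ?_
    positivity
  have hA : (0 : ℝ) ≤ ((Hh : ℝ) - 1) * ((N : ℝ) * Hh ^ 3 * C ^ 2) := by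
    apply mul_nonneg
    · linarith
    · positivity
  have hB2 : (0 : ℝ) ≤ ((N : ℝ) - 1) * ((Hh : ℝ) ^ 4 * C ^ 2) := by
    apply mul_nonneg
    · linarith
    · positivity
  have key : (Hh : ℝ) ^ 2 * s ^ 2
      ≤ Hh * N ^ 2 * C ^ 2 + 2 * Hh * N * τ + 10 * Hh ^ 4 * C ^ 2 * N := by
    calc (Hh : ℝ) ^ 2 * s ^ 2 = ((Hh : ℝ) * s) ^ 2 := by ring
      _ ≤ (b + 2 * Hh ^ 2 * C) ^ 2 := Q1
      _ = b ^ 2 + 4 * Hh ^ 2 * C * b + 4 * Hh ^ 4 * C ^ 2 := by ring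
      _ ≤ N * (Hh * (2 * τ + N * C ^ 2 + 2 * Hh ^ 2 * C ^ 2))
          + 4 * Hh ^ 2 * C * (N * (Hh * C)) + 4 * Hh ^ 4 * C ^ 2 := by linarith [Q3, Q4]
      _ ≤ Hh * N ^ 2 * C ^ 2 + 2 * Hh * N * τ + 10 * Hh ^ 4 * C ^ 2 * N := by
          nlinarith [hA, hB2]
  have expand : (Hh : ℝ) ^ 2 * (N : ℝ) ^ 2
        * (C ^ 2 / Hh + (2 / Hh) * ((N : ℝ)⁻¹ * τ) + 10 * Hh ^ 2 * C ^ 2 / N)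
      = Hh * N ^ 2 * C ^ 2 + 2 * Hh * N * τ + 10 * Hh ^ 4 * C ^ 2 * N := by
    field_simp
  have heq : ((N : ℝ)⁻¹ * s) ^ 2 = ((Hh : ℝ) ^ 2 * s ^ 2) / ((Hh : ℝ) ^ 2 * (N : ℝ) ^ 2) := by
    field_simp
  rw [heq, div_le_iff₀ (by positivity)]
  calc (Hh : ℝ) ^ 2 * s ^ 2
      ≤ Hh * N ^ 2 * C ^ 2 + 2 * Hh * N * τ + 10 * Hh ^ 4 * C ^ 2 * N := key
    _ = (Hh : ℝ) ^ 2 * (N : ℝ) ^ 2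
        * (C ^ 2 / Hh + (2 / Hh) * ((N : ℝ)⁻¹ * τ) + 10 * Hh ^ 2 * C ^ 2 / N) := expand.symm
    _ = (C ^ 2 / Hh + (2 / Hh) * ((N : ℝ)⁻¹ * τ) + 10 * Hh ^ 2 * C ^ 2 / N)
        * ((Hh : ℝ) ^ 2 * (N : ℝ) ^ 2) := by ring

end vdcInner

theorem vdc_variant_iii
    {H : Type*} [NormedAddCommGroup H] [InnerProductSpace ℂ H] [CompleteSpace H]
    (x : ℕ → H) (hbdd : ∃ C : ℝ, ∀ n, ‖x n‖ ≤ C)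
    (hyp : Tendsto
      (fun M : ℕ => ((M : ℝ))⁻¹ * ∑ h ∈ Finset.Icc 1 M, Filter.limsup
        (fun N : ℕ => ‖((N : ℂ))⁻¹ * ∑ n ∈ Finset.Icc 1 N, ⟪x (n + h), x n⟫_ℂ‖)
        atTop)
      atTop (nhds 0)) :
    Tendsto (fun N : ℕ => ‖((N : ℝ))⁻¹ • ∑ n ∈ Finset.Icc 1 N, x n‖)
      atTop (nhds 0) := by
  obtain ⟨C₀, hC₀⟩ := hbdd
  set C := max C₀ 1 with hCdef
  have hC : ∀ n, ‖x n‖ ≤ C := fun n => (hC₀ n).trans (le_max_left _ _)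
  have hC0 : (0 : ℝ) ≤ C := le_trans zero_le_one (le_max_right _ _)
  set bv : ℕ → ℕ → ℝ :=
    fun N d => ‖((N : ℂ))⁻¹ * ∑ n ∈ Finset.Icc 1 N, ⟪x (n + d), x n⟫_ℂ‖ with hbv
  set a : ℕ → ℝ := fun d => Filter.limsup (fun N => bv N d) atTop with ha
  have hyp' : Tendsto (fun M : ℕ => ((M : ℝ))⁻¹ * ∑ h ∈ Finset.Icc 1 M, a h)
      atTop (nhds 0) := hyp
  have hbv_le : ∀ N d, bv N d ≤ C ^ 2 := by
    intro N d
    rcases Nat.eq_zero_or_pos N with h0 | h1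
    · subst h0; simp [hbv]; positivity
    · have hb : ‖∑ n ∈ Icc 1 N, ⟪x (n + d), x n⟫_ℂ‖ ≤ N * C ^ 2 := by
        calc ‖∑ n ∈ Icc 1 N, ⟪x (n + d), x n⟫_ℂ‖
            ≤ ∑ n ∈ Icc 1 N, ‖(⟪x (n + d), x n⟫_ℂ)‖ := norm_sum_le _ _
          _ ≤ (Icc 1 N).card • (C ^ 2) := by
              refine Finset.sum_le_card_nsmul _ _ _ (fun n _ => ?_)
              calc ‖(⟪x (n + d), x n⟫_ℂ)‖ ≤ ‖x (n + d)‖ * ‖x n‖ := norm_inner_le_norm _ _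
                _ ≤ C * C := mul_le_mul (hC _) (hC _) (norm_nonneg _) hC0
                _ = C ^ 2 := (sq C).symm
          _ = N * C ^ 2 := by rw [nsmul_eq_mul, Nat.card_Icc]; norm_num
      have hN0 : (0 : ℝ) < N := by exact_mod_cast h1
      have : bv N d = (N : ℝ)⁻¹ * ‖∑ n ∈ Icc 1 N, ⟪x (n + d), x n⟫_ℂ‖ := by
        rw [hbv]
        simp only [norm_mul, norm_inv, Complex.norm_natCast]
      rw [this]
      calc (N : ℝ)⁻¹ * ‖∑ n ∈ Icc 1 N, ⟪x (n + d), x n⟫_ℂ‖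
          ≤ (N : ℝ)⁻¹ * (N * C ^ 2) := by
            exact mul_le_mul_of_nonneg_left hb (by positivity)
        _ = C ^ 2 := by field_simp
  have hbdd_ab : ∀ d, IsBoundedUnder (· ≤ ·) atTop (fun N => bv N d) :=
    fun d => isBoundedUnder_of ⟨C ^ 2, fun N => hbv_le N d⟩
  have ha_lt : ∀ d (δ : ℝ), 0 < δ → ∀ᶠ N in atTop, bv N d < a d + δ := by
    intro d δ hδ
    exact eventually_lt_of_limsup_lt (lt_add_of_pos_right _ hδ) (hbdd_ab d)
  rw [Metric.tendsto_atTop]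
  intro ε hε
  have hε2 : (0 : ℝ) < ε ^ 2 / 2 := by positivity
  -- choose Hh
  have t1 : Tendsto (fun M : ℕ => C ^ 2 / (M : ℝ)) atTop (nhds 0) :=
    tendsto_const_div_atTop_nhds_zero_nat _
  have t2 : Tendsto (fun M : ℕ => C ^ 2 / (M : ℝ)
      + 2 * ((M : ℝ)⁻¹ * ∑ h ∈ Finset.Icc 1 M, a h)) atTop (nhds 0) := by
    have := t1.add (hyp'.const_mul 2)
    simpa using this
  obtain ⟨Hh, hHh2, hHh1⟩ : ∃ Hh : ℕ, (C ^ 2 / (Hh : ℝ)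
      + 2 * ((Hh : ℝ)⁻¹ * ∑ h ∈ Finset.Icc 1 Hh, a h) < ε ^ 2 / 2) ∧ 1 ≤ Hh :=
    ((t2.eventually (gt_mem_nhds hε2)).and (eventually_ge_atTop 1)).exists
  have hHh0 : (0 : ℝ) < Hh := by exact_mod_cast hHh1
  set δ : ℝ := ε ^ 2 / 8 with hδdef
  have hδ0 : 0 < δ := by positivity
  have E1 : ∀ᶠ N in atTop, ∀ d ∈ Icc 1 Hh, bv N d < a d + δ := by
    rw [eventually_all_finset]
    intro d _
    exact ha_lt d δ hδ0
  have E2 : ∀ᶠ N : ℕ in atTop, 10 * (Hh : ℝ) ^ 2 * C ^ 2 / (N : ℝ) < ε ^ 2 / 4 := by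
    have h := tendsto_const_div_atTop_nhds_zero_nat (10 * (Hh : ℝ) ^ 2 * C ^ 2)
    exact h.eventually (gt_mem_nhds (by positivity))
  have E3 : ∀ᶠ N : ℕ in atTop, 1 ≤ N := eventually_ge_atTop 1
  obtain ⟨N₀, hN₀⟩ := eventually_atTop.mp ((E1.and (E2.and E3)))
  refine ⟨N₀, fun n hn => ?_⟩
  obtain ⟨h1, h2, h3⟩ := hN₀ n hn
  rw [Real.dist_eq, sub_zero, abs_of_nonneg (norm_nonneg _)]
  have main := vdc_main_ineq x C hC n Hh h3 hHh1
  have hsum : ∑ d ∈ Icc 1 Hh, bv n d ≤ (∑ d ∈ Icc 1 Hh, a d) + Hh * δ := by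
    calc ∑ d ∈ Icc 1 Hh, bv n d ≤ ∑ d ∈ Icc 1 Hh, (a d + δ) :=
          Finset.sum_le_sum fun d hd => (h1 d hd).le
      _ = (∑ d ∈ Icc 1 Hh, a d) + (Icc 1 Hh).card * δ := by
          rw [Finset.sum_add_distrib, Finset.sum_const, nsmul_eq_mul]
      _ = (∑ d ∈ Icc 1 Hh, a d) + Hh * δ := by rw [Nat.card_Icc]; norm_num
  have e4 : (2 / (Hh : ℝ)) * ((∑ d ∈ Icc 1 Hh, a d) + Hh * δ)
      = 2 * ((Hh : ℝ)⁻¹ * ∑ d ∈ Icc 1 Hh, a d) + 2 * δ := by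
    field_simp
  have hlt : ‖((n : ℝ))⁻¹ • ∑ k ∈ Finset.Icc 1 n, x k‖ ^ 2 < ε ^ 2 := by
    have step : (2 / (Hh : ℝ)) * ∑ d ∈ Icc 1 Hh, bv n d
        ≤ 2 * ((Hh : ℝ)⁻¹ * ∑ d ∈ Icc 1 Hh, a d) + 2 * δ := by
      rw [← e4]
      exact mul_le_mul_of_nonneg_left hsum (by positivity)
    have hδ4 : 2 * δ = ε ^ 2 / 4 := by rw [hδdef]; ring
    calc ‖((n : ℝ))⁻¹ • ∑ k ∈ Finset.Icc 1 n, x k‖ ^ 2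
        ≤ C ^ 2 / Hh + (2 / Hh) * ∑ d ∈ Icc 1 Hh, bv n d
          + 10 * Hh ^ 2 * C ^ 2 / n := main
      _ < ε ^ 2 / 2 + ε ^ 2 / 4 + ε ^ 2 / 4 := by
          have := step
          linarith [hHh2, h2]
      _ = ε ^ 2 := by ring
  nlinarith [norm_nonneg (((n : ℝ))⁻¹ • ∑ k ∈ Finset.Icc 1 n, x k), hlt, hε]
end

section
/- Let (X, B, ν) be a probability space, and let T and S be two measure-preserving ℤ-actions (or actions of a group G) on X with invariant σ-algebras I_T and I_S. Then for every bounded nonnegative measurable function h on X, ∫_X h · E[h | I_T] · E[h | I_S] dν ≥ (∫_X h dν)³. -/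
open MeasureTheory

private lemma integrable_of_bdd {X : Type*} [MeasurableSpace X] {μ : Measure X}
    [IsFiniteMeasure μ] {f : X → ℝ} (hf : AEStronglyMeasurable f μ) {C : ℝ}
    (hC : ∀ᵐ x ∂μ, |f x| ≤ C) : Integrable f μ :=
  (integrable_const C).mono' hf (by simpa [Real.norm_eq_abs] using hC)

private lemma condexp_bdd {X : Type*} {m m1 : MeasurableSpace X} (hm1 : m1 ≤ m)
    (ν : @Measure X m) [IsProbabilityMeasure ν] {f : X → ℝ} (hf : Integrable f ν)
    {C : ℝ} (hC : ∀ᵐ x ∂ν, |f x| ≤ C) :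
    ∀ᵐ x ∂ν, |MeasureTheory.condExp m1 ν f x| ≤ C := by
  have h1 : f ≤ᵐ[ν] fun _ => C := hC.mono fun x hx => (abs_le.1 hx).2
  have h2 : (fun _ : X => -C) ≤ᵐ[ν] f := hC.mono fun x hx => (abs_le.1 hx).1
  have e1 := condExp_mono (m := m1) hf (integrable_const C) h1
  have e2 := condExp_mono (m := m1) (integrable_const (-C)) hf h2
  have c1 := condExp_const (μ := ν) hm1 C
  have c2 := condExp_const (μ := ν) hm1 (-C)
  filter_upwards [e1, e2] with x hx1 hx2
  rw [abs_le]
  rw [c1] at hx1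
  rw [c2] at hx2
  exact ⟨hx2, hx1⟩

private lemma integral_CS {X : Type*} [MeasurableSpace X] {μ : Measure X}
    {f g : X → ℝ} (hff : Integrable (fun x => f x * f x) μ)
    (hgg : Integrable (fun x => g x * g x) μ)
    (hfg : Integrable (fun x => f x * g x) μ) :
    (∫ x, f x * g x ∂μ) ^ 2 ≤ (∫ x, f x * f x ∂μ) * ∫ x, g x * g x ∂μ := by
  set A := ∫ x, f x * f x ∂μ with hA
  set B := ∫ x, f x * g x ∂μ with hB
  set Cc := ∫ x, g x * g x ∂μ with hCc
  have key : ∀ t : ℝ, 0 ≤ A * (t * t) + (2 * B) * t + Cc := by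
    intro t
    have h0 : 0 ≤ ∫ x, (t * f x + g x) * (t * f x + g x) ∂μ :=
      integral_nonneg fun x => mul_self_nonneg _
    have h1 : ∫ x, (t * f x + g x) * (t * f x + g x) ∂μ
        = A * (t * t) + (2 * B) * t + Cc := by
      have e : (fun x => (t * f x + g x) * (t * f x + g x))
          = fun x => (t * t) * (f x * f x) + ((2 * t) * (f x * g x) + g x * g x) := by
        funext x; ring
      have i2 : Integrable (fun x => (2 * t) * (f x * g x) + g x * g x) μ := by
        exact (hfg.const_mul _).add hgg
      rw [e, integral_add (hff.const_mul _) i2,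
        integral_add (hfg.const_mul _) hgg, integral_const_mul, integral_const_mul]
      ring
    linarith [h1 ▸ h0]
  have := discrim_le_zero key
  rw [discrim] at this
  nlinarith [this]

private lemma condexp_CS {X : Type*} {m : MeasurableSpace X} {m1 : MeasurableSpace X}
    (ν : @Measure X m) [IsProbabilityMeasure ν]
    {f g : X → ℝ} (hf : Integrable f ν) (hfg : Integrable (fun x => f x * g x) ν)
    (hfgg : Integrable (fun x => f x * (g x * g x)) ν)
    (hfpos : ∀ x, 0 ≤ f x) :
    ∀ᵐ x ∂ν, (MeasureTheory.condExp m1 ν (fun y => f y * g y) x) ^ 2 ≤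
      (MeasureTheory.condExp m1 ν f x) * (MeasureTheory.condExp m1 ν (fun y => f y * (g y * g y)) x) := by
  set A := MeasureTheory.condExp m1 ν f with hA
  set B := MeasureTheory.condExp m1 ν (fun y => f y * g y) with hB
  set Cc := MeasureTheory.condExp m1 ν (fun y => f y * (g y * g y)) with hCc
  have hq : ∀ q : ℚ, ∀ᵐ x ∂ν,
      0 ≤ Cc x + (-(2 * (q : ℝ))) * B x + ((q : ℝ) * (q : ℝ)) * A x := by
    intro q
    set c1 : ℝ := -(2 * (q : ℝ)) with hc1
    set c2 : ℝ := (q : ℝ) * (q : ℝ) with hc2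
    have hdecomp : (fun y => f y * ((g y - (q : ℝ)) * (g y - (q : ℝ))))
        = (fun y => f y * (g y * g y)) + (c1 • fun y => f y * g y) + c2 • f := by
      funext y
      simp only [Pi.add_apply, Pi.smul_apply, smul_eq_mul, hc1, hc2]
      ring
    have hint1 : Integrable (c1 • fun y => f y * g y) ν := hfg.smul c1
    have hint2 : Integrable (c2 • f) ν := hf.smul c2
    have e0 : MeasureTheory.condExp m1 ν ((fun y => f y * (g y * g y)) + (c1 • fun y => f y * g y) + c2 • f)
        =ᵐ[ν] Cc + c1 • B + c2 • A := by
      calc MeasureTheory.condExp m1 ν ((fun y => f y * (g y * g y)) + (c1 • fun y => f y * g y) + c2 • f)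
          =ᵐ[ν] MeasureTheory.condExp m1 ν ((fun y => f y * (g y * g y)) + (c1 • fun y => f y * g y))
            + MeasureTheory.condExp m1 ν (c2 • f) := condExp_add (hfgg.add hint1) hint2 m1
        _ =ᵐ[ν] (MeasureTheory.condExp m1 ν (fun y => f y * (g y * g y)) + MeasureTheory.condExp m1 ν (c1 • fun y => f y * g y))
            + MeasureTheory.condExp m1 ν (c2 • f) := (condExp_add hfgg hint1 m1).add Filter.EventuallyEq.rfl
        _ =ᵐ[ν] Cc + c1 • B + c2 • A :=
            (Filter.EventuallyEq.rfl.add (condExp_smul c1 _ m1)).add (condExp_smul c2 f m1)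
    have e1 : 0 ≤ᵐ[ν]
        MeasureTheory.condExp m1 ν ((fun y => f y * (g y * g y)) + (c1 • fun y => f y * g y) + c2 • f) := by
      refine condExp_nonneg ?_
      rw [← hdecomp]
      exact Filter.Eventually.of_forall fun y => mul_nonneg (hfpos y) (mul_self_nonneg _)
    filter_upwards [e0, e1] with x hx0 hx1
    have : (0 : ℝ) ≤ (Cc + c1 • B + c2 • A) x := hx0 ▸ hx1
    simpa [Pi.add_apply, Pi.smul_apply, smul_eq_mul] using this
  have hA0 : (0 : X → ℝ) ≤ᵐ[ν] A := condExp_nonneg (Filter.Eventually.of_forall hfpos)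
  have hall : ∀ᵐ x ∂ν, ∀ q : ℚ,
      0 ≤ Cc x + (-(2 * (q : ℝ))) * B x + ((q : ℝ) * (q : ℝ)) * A x := ae_all_iff.2 hq
  filter_upwards [hall, hA0] with x hx hAx
  have hreal : ∀ t : ℝ, 0 ≤ A x * (t * t) + (-(2 * B x)) * t + Cc x := by
    have hclosed : IsClosed {t : ℝ | 0 ≤ A x * (t * t) + (-(2 * B x)) * t + Cc x} :=
      isClosed_le continuous_const (by continuity)
    have hsub : Set.range ((↑) : ℚ → ℝ) ⊆
        {t : ℝ | 0 ≤ A x * (t * t) + (-(2 * B x)) * t + Cc x} := by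
      rintro t ⟨q, rfl⟩
      have := hx q
      simp only [Set.mem_setOf_eq]
      nlinarith [hx q]
    intro t
    have ht : t ∈ closure (Set.range ((↑) : ℚ → ℝ)) := by
      rw [Rat.denseRange_cast.closure_range]; trivial
    exact closure_minimal hsub hclosed ht
  have hd := discrim_le_zero hreal
  rw [discrim] at hd
  nlinarith [hd]

/-- The σ-algebra of measurable sets invariant under a transformation `T`. -/
def invariantSigmaAlgebra {X : Type*} (m : MeasurableSpace X) (T : X → X) :
    MeasurableSpace X where
  MeasurableSet' s := m.MeasurableSet' s ∧ T ⁻¹' s = s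
  measurableSet_empty := ⟨m.measurableSet_empty, by simp⟩
  measurableSet_compl := fun s hs => ⟨m.measurableSet_compl s hs.1, by
    rw [Set.preimage_compl, hs.2]⟩
  measurableSet_iUnion := fun f hf => ⟨m.measurableSet_iUnion _ fun i => (hf i).1, by
    rw [Set.preimage_iUnion]; simp [fun i => (hf i).2]⟩

/-- Chu's positivity inequality: for a bounded nonnegative function `h` and two
measure-preserving transformations `T`, `S` of a probability space,
`∫ h · E[h|I_T] · E[h|I_S] ≥ (∫ h)³`. -/
theorem chu_positivity
    {X : Type*} [m : MeasurableSpace X] (ν : Measure X) [IsProbabilityMeasure ν]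
    (T S : X → X) (hT : MeasurePreserving T ν ν) (hS : MeasurePreserving S ν ν)
    (h : X → ℝ) (hmeas : Measurable h) (hpos : ∀ x, 0 ≤ h x)
    (hbdd : ∃ C : ℝ, ∀ x, h x ≤ C) :
    (∫ x, h x ∂ν) ^ 3 ≤
      ∫ x, h x * (MeasureTheory.condExp (invariantSigmaAlgebra m T) ν h x) *
        (MeasureTheory.condExp (invariantSigmaAlgebra m S) ν h x) ∂ν := by
  obtain ⟨C₀, hC₀⟩ := hbdd
  set C : ℝ := max C₀ 1 with hCdef
  have hC1 : (1 : ℝ) ≤ C := le_max_right _ _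
  have hC0 : (0 : ℝ) ≤ C := zero_le_one.trans hC1
  have hhC : ∀ x, h x ≤ C := fun x => (hC₀ x).trans (le_max_left _ _)
  have hm1 : (invariantSigmaAlgebra m T) ≤ m := fun s hs => hs.1
  have hm2 : (invariantSigmaAlgebra m S) ≤ m := fun s hs => hs.1
  set u := MeasureTheory.condExp (invariantSigmaAlgebra m T) ν h with hu
  set v := MeasureTheory.condExp (invariantSigmaAlgebra m S) ν h with hv
  have hhb : ∀ᵐ x ∂ν, |h x| ≤ C :=
    Filter.Eventually.of_forall fun x => by rw [abs_of_nonneg (hpos x)]; exact hhC x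
  have hint : Integrable h ν := integrable_of_bdd hmeas.aestronglyMeasurable hhb
  have hu_bdd : ∀ᵐ x ∂ν, |u x| ≤ C := condexp_bdd hm1 ν hint hhb
  have hv_bdd : ∀ᵐ x ∂ν, |v x| ≤ C := condexp_bdd hm2 ν hint hhb
  have hu_nn : 0 ≤ᵐ[ν] u := condExp_nonneg (Filter.Eventually.of_forall hpos)
  have hv_nn : 0 ≤ᵐ[ν] v := condExp_nonneg (Filter.Eventually.of_forall hpos)
  have hu_sm : StronglyMeasurable[(invariantSigmaAlgebra m T)] u := stronglyMeasurable_condExp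
  have hv_sm : StronglyMeasurable[(invariantSigmaAlgebra m S)] v := stronglyMeasurable_condExp
  have hu_m : AEStronglyMeasurable u ν := (hu_sm.mono hm1).aestronglyMeasurable
  have hv_m : AEStronglyMeasurable v ν := (hv_sm.mono hm2).aestronglyMeasurable
  set g : X → ℝ := fun x => Real.sqrt (v x) with hgdef
  have hg_sm2 : StronglyMeasurable[(invariantSigmaAlgebra m S)] g :=
    Real.continuous_sqrt.comp_stronglyMeasurable hv_sm
  have hg_m : AEStronglyMeasurable g ν := (hg_sm2.mono hm2).aestronglyMeasurable
  have hg_nn : ∀ x, 0 ≤ g x := fun x => Real.sqrt_nonneg _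
  have hg_bdd : ∀ᵐ x ∂ν, |g x| ≤ C := by
    filter_upwards [hv_bdd] with x hx
    rw [abs_of_nonneg (hg_nn x)]
    have h1 : v x ≤ C * C := by nlinarith [(abs_le.1 hx).2]
    calc g x ≤ Real.sqrt (C * C) := Real.sqrt_le_sqrt h1
      _ = C := Real.sqrt_mul_self hC0
  -- integrabilities
  have I_hg : Integrable (fun x => h x * g x) ν := by
    refine integrable_of_bdd (hmeas.aestronglyMeasurable.mul hg_m) (C := C * C) ?_
    filter_upwards [hg_bdd] with x hx
    rw [abs_mul]
    exact mul_le_mul (by rw [abs_of_nonneg (hpos x)]; exact hhC x) hx (abs_nonneg _) hC0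
  have I_hgg : Integrable (fun x => h x * (g x * g x)) ν := by
    refine integrable_of_bdd
      ((hmeas.aestronglyMeasurable).mul (hg_m.mul hg_m)) (C := C * (C * C)) ?_
    filter_upwards [hg_bdd] with x hx
    rw [abs_mul, abs_mul]
    refine mul_le_mul (by rw [abs_of_nonneg (hpos x)]; exact hhC x)
      (mul_le_mul hx hx (abs_nonneg _) hC0) (by positivity) hC0
  have I_hv : Integrable (fun x => h x * v x) ν := by
    refine integrable_of_bdd (hmeas.aestronglyMeasurable.mul hv_m) (C := C * C) ?_
    filter_upwards [hv_bdd] with x hx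
    rw [abs_mul]
    exact mul_le_mul (by rw [abs_of_nonneg (hpos x)]; exact hhC x) hx (abs_nonneg _) hC0
  set w := MeasureTheory.condExp (invariantSigmaAlgebra m T) ν (fun x => h x * v x) with hw
  have hw_bdd : ∀ᵐ x ∂ν, |w x| ≤ C * C := by
    refine condexp_bdd hm1 ν I_hv ?_
    filter_upwards [hv_bdd] with x hx
    rw [abs_mul]
    exact mul_le_mul (by rw [abs_of_nonneg (hpos x)]; exact hhC x) hx (abs_nonneg _) hC0
  have hw_sm : StronglyMeasurable[(invariantSigmaAlgebra m T)] w := stronglyMeasurable_condExp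
  have hw_m : AEStronglyMeasurable w ν := (hw_sm.mono hm1).aestronglyMeasurable
  -- Step A : RHS = ∫ u * w
  have I_ughv : Integrable (u * fun x => h x * v x) ν := by
    refine integrable_of_bdd (hu_m.mul (hmeas.aestronglyMeasurable.mul hv_m))
      (C := C * (C * C)) ?_
    filter_upwards [hu_bdd, hv_bdd] with x hxu hxv
    have : |u x * (h x * v x)| = |u x| * (|h x| * |v x|) := by rw [abs_mul, abs_mul]
    rw [Pi.mul_apply, this]
    exact mul_le_mul hxu (mul_le_mul (by rw [abs_of_nonneg (hpos x)]; exact hhC x) hxv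
      (abs_nonneg _) hC0) (by positivity) hC0
  have stepA : ∫ x, h x * u x * v x ∂ν = ∫ x, u x * w x ∂ν := by
    have e1 : (fun x => h x * u x * v x) = fun x => (u * fun y => h y * v y) x := by
      funext x; simp [Pi.mul_apply]; ring
    rw [e1]
    have e2 := condExp_mul_of_stronglyMeasurable_left (μ := ν) hu_sm I_ughv I_hv
    rw [← integral_condExp hm1]
    exact integral_congr_ae (e2.mono fun x hx => by rw [hx]; rfl)
  -- Step B : conditional Cauchy-Schwarz
  set B := MeasureTheory.condExp (invariantSigmaAlgebra m T) ν (fun x => h x * g x) with hB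
  have hB_sm : StronglyMeasurable[(invariantSigmaAlgebra m T)] B := stronglyMeasurable_condExp
  have hB_m : AEStronglyMeasurable B ν := (hB_sm.mono hm1).aestronglyMeasurable
  have hB_bdd : ∀ᵐ x ∂ν, |B x| ≤ C * C := by
    refine condexp_bdd hm1 ν I_hg ?_
    filter_upwards [hg_bdd] with x hx
    rw [abs_mul]
    exact mul_le_mul (by rw [abs_of_nonneg (hpos x)]; exact hhC x) hx (abs_nonneg _) hC0
  have hgg_v : (fun x => h x * (g x * g x)) =ᵐ[ν] fun x => h x * v x := by
    filter_upwards [hv_nn] with x hx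
    rw [hgdef]
    simp only
    rw [Real.mul_self_sqrt hx]
  have hCS := condexp_CS (m1 := invariantSigmaAlgebra m T) ν hint I_hg I_hgg hpos
  have hBsq : ∀ᵐ x ∂ν, B x * B x ≤ u x * w x := by
    have e3 : MeasureTheory.condExp (invariantSigmaAlgebra m T) ν (fun x => h x * (g x * g x)) =ᵐ[ν] w :=
      condExp_congr_ae hgg_v
    filter_upwards [hCS, e3] with x hx he
    rw [he] at hx
    nlinarith [hx]
  -- Step C : ∫ B² ≤ ∫ u * w
  have I_BB : Integrable (fun x => B x * B x) ν := by
    refine integrable_of_bdd (hB_m.mul hB_m) (C := (C * C) * (C * C)) ?_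
    filter_upwards [hB_bdd] with x hx
    rw [abs_mul]
    exact mul_le_mul hx hx (abs_nonneg _) (by positivity)
  have I_uw : Integrable (fun x => u x * w x) ν := by
    refine integrable_of_bdd (hu_m.mul hw_m) (C := C * (C * C)) ?_
    filter_upwards [hu_bdd, hw_bdd] with x hx1 hx2
    rw [abs_mul]
    exact mul_le_mul hx1 hx2 (abs_nonneg _) hC0
  have stepC : ∫ x, B x * B x ∂ν ≤ ∫ x, u x * w x ∂ν :=
    integral_mono_ae I_BB I_uw hBsq
  -- Step D : (∫ B)² ≤ ∫ B²
  have I_one : Integrable (fun _ : X => (1 : ℝ) * 1) ν := by simpa using integrable_const (1 : ℝ)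
  have stepD : (∫ x, B x ∂ν) ^ 2 ≤ ∫ x, B x * B x ∂ν := by
    have := integral_CS (f := B) (g := fun _ => (1 : ℝ)) I_BB I_one
      (by simpa using integrable_of_bdd hB_m hB_bdd)
    simpa using this
  -- Step E : ∫ B = ∫ h g
  have stepE : ∫ x, B x ∂ν = ∫ x, h x * g x ∂ν := integral_condExp hm1
  -- Step F : ∫ h g = ∫ v g
  have I_ghmul : Integrable (g * h) ν := by
    have : (g * h) = fun x => h x * g x := by funext x; simp [Pi.mul_apply]; ring
    rw [this]; exact I_hg
  have stepF : ∫ x, h x * g x ∂ν = ∫ x, v x * g x ∂ν := by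
    have e4 := condExp_mul_of_stronglyMeasurable_left (μ := ν) hg_sm2 I_ghmul hint
    have e5 : ∫ x, g x * h x ∂ν = ∫ x, g x * v x ∂ν := by
      rw [show (fun x => g x * h x) = fun x => (g * h) x from rfl]
      rw [← integral_condExp hm2 (f := g * h)]
      exact integral_congr_ae (e4.mono fun x hx => by rw [hx]; rfl)
    calc ∫ x, h x * g x ∂ν = ∫ x, g x * h x ∂ν := by
          congr 1; funext x; ring
      _ = ∫ x, g x * v x ∂ν := e5
      _ = ∫ x, v x * g x ∂ν := by congr 1; funext x; ring
  -- quantities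
  set a := ∫ x, h x ∂ν with ha
  have ha_nn : 0 ≤ a := integral_nonneg hpos
  have hva : ∫ x, v x ∂ν = a := integral_condExp hm2
  set Xq := ∫ x, v x * g x ∂ν with hXq
  set Yq := ∫ x, g x ∂ν with hYq
  have I_vg : Integrable (fun x => v x * g x) ν := by
    refine integrable_of_bdd (hv_m.mul hg_m) (C := C * C) ?_
    filter_upwards [hv_bdd, hg_bdd] with x hx1 hx2
    rw [abs_mul]; exact mul_le_mul hx1 hx2 (abs_nonneg _) hC0
  have I_g : Integrable g ν := integrable_of_bdd hg_m hg_bdd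
  have I_gg : Integrable (fun x => g x * g x) ν := by
    refine integrable_of_bdd (hg_m.mul hg_m) (C := C * C) ?_
    filter_upwards [hg_bdd] with x hx
    rw [abs_mul]; exact mul_le_mul hx hx (abs_nonneg _) hC0
  have hXq_nn : 0 ≤ Xq := integral_nonneg_of_ae (by
    filter_upwards [hv_nn] with x hx; exact mul_nonneg hx (hg_nn x))
  have hYq_nn : 0 ≤ Yq := integral_nonneg fun x => hg_nn x
  -- Step H : Yq² ≤ a
  have hgg_int_eq : ∫ x, g x * g x ∂ν = a := by
    rw [← hva]
    refine integral_congr_ae ?_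
    filter_upwards [hv_nn] with x hx
    simp only [hgdef]
    rw [Real.mul_self_sqrt hx]
  have stepH : Yq ^ 2 ≤ a := by
    have := integral_CS (f := g) (g := fun _ => (1 : ℝ)) I_gg I_one (by simpa using I_g)
    rw [hgg_int_eq] at this
    simpa [hYq] using this
  -- Step I : a² ≤ Xq * Yq
  set p : X → ℝ := fun x => Real.sqrt (v x * g x) with hpdef
  set s : X → ℝ := fun x => Real.sqrt (g x) with hsdef
  have hp_m : AEStronglyMeasurable p ν :=
    Real.continuous_sqrt.comp_aestronglyMeasurable (hv_m.mul hg_m)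
  have hs_m : AEStronglyMeasurable s ν :=
    Real.continuous_sqrt.comp_aestronglyMeasurable hg_m
  have hpp : (fun x => p x * p x) =ᵐ[ν] fun x => v x * g x := by
    filter_upwards [hv_nn] with x hx
    exact Real.mul_self_sqrt (mul_nonneg hx (hg_nn x))
  have hss : (fun x => s x * s x) =ᵐ[ν] g :=
    Filter.Eventually.of_forall fun x => Real.mul_self_sqrt (hg_nn x)
  have hps : (fun x => p x * s x) =ᵐ[ν] v := by
    filter_upwards [hv_nn] with x hx
    simp only [hpdef, hsdef]
    rw [← Real.sqrt_mul (mul_nonneg hx (hg_nn x))]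
    have : v x * g x * g x = v x * v x := by
      have : g x * g x = v x := Real.mul_self_sqrt hx
      nlinarith [this]
    rw [this, Real.sqrt_mul_self hx]
  have I_pp : Integrable (fun x => p x * p x) ν := I_vg.congr hpp.symm
  have I_ss : Integrable (fun x => s x * s x) ν := I_g.congr hss.symm
  have I_ps : Integrable (fun x => p x * s x) ν :=
    (integrable_of_bdd hv_m hv_bdd).congr hps.symm
  have stepI : a ^ 2 ≤ Xq * Yq := by
    have hcs := integral_CS (f := p) (g := s) I_pp I_ss I_ps
    rw [integral_congr_ae hps, integral_congr_ae hpp, integral_congr_ae hss, hva] at hcs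
    exact hcs
  -- combine
  have key1 : Xq ^ 2 ≤ ∫ x, h x * u x * v x ∂ν := by
    calc Xq ^ 2 = (∫ x, B x ∂ν) ^ 2 := by rw [stepE, stepF]
      _ ≤ ∫ x, B x * B x ∂ν := stepD
      _ ≤ ∫ x, u x * w x ∂ν := stepC
      _ = ∫ x, h x * u x * v x ∂ν := stepA.symm
  rcases eq_or_lt_of_le ha_nn with h0 | hapos
  · calc a ^ 3 = 0 := by rw [← h0]; ring
      _ ≤ Xq ^ 2 := sq_nonneg _
      _ ≤ _ := key1
  · have hR_nn : 0 ≤ ∫ x, h x * u x * v x ∂ν := le_trans (sq_nonneg Xq) key1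
    have h4 : a ^ 4 ≤ (∫ x, h x * u x * v x ∂ν) * a := by
      calc a ^ 4 = (a ^ 2) ^ 2 := by ring
        _ ≤ (Xq * Yq) ^ 2 := pow_le_pow_left₀ (sq_nonneg a) stepI 2
        _ = Xq ^ 2 * Yq ^ 2 := by ring
        _ ≤ (∫ x, h x * u x * v x ∂ν) * a := mul_le_mul key1 stepH (sq_nonneg Yq) hR_nn
    have h5 : a ^ 3 * a ≤ (∫ x, h x * u x * v x ∂ν) * a := by
      calc a ^ 3 * a = a ^ 4 := by ring
        _ ≤ _ := h4
    exact le_of_mul_le_mul_right h5 hapos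
end

section
/- Let G be a countable group, (F_N) a Følner sequence, and H a Hilbert space. Fix bounded maps making all relevant Cesàro limits exist along a subsequence (F_{N_q}); let 𝓗 denote the resulting space of square-averageable sequences modulo null sequences, with inner product ⟨x,y⟩_𝓗 = lim_q (1/|F_{N_q}|)∑_{g∈F_{N_q}} ⟨x(g), y(g)⟩. Then 𝓗 is complete: every Cauchy sequence (ξ_m) in 𝓗 admits a limit ξ with lim_m lim_q (1/|F_{N_q}|)∑_{g∈F_{N_q}} ‖ξ_m(g) − ξ(g)‖² = 0. -/
open Filter Finset


lemma sq_tri {H : Type*} [NormedAddCommGroup H] (x y z : H) :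
    ‖x - z‖^2 ≤ 2*‖x - y‖^2 + 2*‖y - z‖^2 := by
  have h : ‖x - z‖ ≤ ‖x - y‖ + ‖y - z‖ := by
    simpa [dist_eq_norm] using dist_triangle x y z
  nlinarith [sq_nonneg (‖x - y‖ - ‖y - z‖), norm_nonneg (x-z), norm_nonneg (x-y), norm_nonneg (y-z)]

lemma sq_zero_tri {H : Type*} [NormedAddCommGroup H] (x y : H) :
    ‖y‖^2 ≤ 2*‖x - y‖^2 + 2*‖x‖^2 := by
  have h : ‖y‖ ≤ ‖x - y‖ + ‖x‖ := by
    have : y = x - (x - y) := by abel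
    calc ‖y‖ = ‖x - (x - y)‖ := by rw [← this]
    _ ≤ ‖x‖ + ‖x - y‖ := norm_sub_le _ _
    _ = ‖x - y‖ + ‖x‖ := by ring
  nlinarith [sq_nonneg (‖x - y‖ - ‖x‖), norm_nonneg y, norm_nonneg (x-y), norm_nonneg x]

lemma geom_half_le (n : ℕ) : ∑ i ∈ range n, ((1:ℝ)/2)^i ≤ 2 := by
  rw [geom_sum_eq (by norm_num : ((1:ℝ)/2) ≠ 1)]
  have h := pow_nonneg (by norm_num : (0:ℝ) ≤ 1/2) n
  have e : ((1/2:ℝ)^n - 1)/((1/2:ℝ)-1) = 2 - 2*(1/2:ℝ)^n := by ring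
  rw [e]; linarith

lemma sq_sum_le (j c : ℕ) (a : ℕ → ℝ) :
    (∑ l ∈ Ico j c, a l)^2 ≤ 2 * ∑ l ∈ Ico j c, (2:ℝ)^(l-j) * (a l)^2 := by
  have key : (∑ l ∈ Ico j c, a l)^2 ≤
      (∑ l ∈ Ico j c, ((1:ℝ)/2)^(l-j)) * ∑ l ∈ Ico j c, (2:ℝ)^(l-j) * (a l)^2 := by
    have cs := Finset.sum_mul_sq_le_sq_mul_sq (Ico j c)
      (fun l => Real.sqrt (((1:ℝ)/2)^(l-j))) (fun l => Real.sqrt ((2:ℝ)^(l-j)) * a l)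
    have h1 : ∀ l, Real.sqrt (((1:ℝ)/2)^(l-j)) * (Real.sqrt ((2:ℝ)^(l-j)) * a l) = a l := by
      intro l
      rw [← mul_assoc, ← Real.sqrt_mul (by positivity)]
      have : ((1:ℝ)/2)^(l-j) * (2:ℝ)^(l-j) = 1 := by
        rw [← mul_pow]; norm_num
      rw [this, Real.sqrt_one, one_mul]
    have h2 : ∀ l, (Real.sqrt (((1:ℝ)/2)^(l-j)))^2 = ((1:ℝ)/2)^(l-j) := fun l =>
      Real.sq_sqrt (by positivity)
    have h3 : ∀ l, (Real.sqrt ((2:ℝ)^(l-j)) * a l)^2 = (2:ℝ)^(l-j) * (a l)^2 := by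
      intro l
      rw [mul_pow, Real.sq_sqrt (by positivity)]
    calc (∑ l ∈ Ico j c, a l)^2
        = (∑ l ∈ Ico j c, Real.sqrt (((1:ℝ)/2)^(l-j)) * (Real.sqrt ((2:ℝ)^(l-j)) * a l))^2 := by
          congr 1; exact (Finset.sum_congr rfl (fun l _ => (h1 l).symm))
      _ ≤ (∑ l ∈ Ico j c, (Real.sqrt (((1:ℝ)/2)^(l-j)))^2) *
          ∑ l ∈ Ico j c, (Real.sqrt ((2:ℝ)^(l-j)) * a l)^2 := cs
      _ = (∑ l ∈ Ico j c, ((1:ℝ)/2)^(l-j)) * ∑ l ∈ Ico j c, (2:ℝ)^(l-j) * (a l)^2 := by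
          rw [Finset.sum_congr rfl (fun l _ => h2 l), Finset.sum_congr rfl (fun l _ => h3 l)]
  refine le_trans key (mul_le_mul_of_nonneg_right ?_ ?_)
  · rw [Finset.sum_Ico_eq_sum_range]
    calc ∑ i ∈ range (c - j), ((1:ℝ)/2)^(j + i - j)
        = ∑ i ∈ range (c - j), ((1:ℝ)/2)^i := by
          refine Finset.sum_congr rfl (fun i _ => ?_); congr 1; omega
      _ ≤ 2 := geom_half_le _
  · exact Finset.sum_nonneg (fun l _ => by positivity)

lemma tele_sq_bound {H : Type*} [NormedAddCommGroup H] (x : ℕ → H) {j L : ℕ} (h : j ≤ L) :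
    ‖x j - x L‖^2 ≤ 2 * ∑ l ∈ Ico j L, (2:ℝ)^(l-j) * ‖x l - x (l+1)‖^2 := by
  have h1 : ‖x j - x L‖ ≤ ∑ l ∈ Ico j L, ‖x l - x (l+1)‖ := by
    simpa [dist_eq_norm] using dist_le_Ico_sum_dist x h
  calc ‖x j - x L‖^2 ≤ (∑ l ∈ Ico j L, ‖x l - x (l+1)‖)^2 :=
        pow_le_pow_left₀ (norm_nonneg _) h1 2
    _ ≤ 2 * ∑ l ∈ Ico j L, (2:ℝ)^(l-j) * ‖x l - x (l+1)‖^2 := sq_sum_le j L _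

lemma tail_geom_bound (j L : ℕ) :
    2 * ∑ l ∈ Ico j L, (2:ℝ)^(l-j) * (1/4)^(l+2) ≤ (1/4:ℝ)^(j+1) := by
  have : ∑ l ∈ Ico j L, (2:ℝ)^(l-j) * (1/4)^(l+2) =
      (1/4:ℝ)^(j+2) * ∑ i ∈ range (L - j), ((1:ℝ)/2)^i := by
    rw [Finset.sum_Ico_eq_sum_range, Finset.mul_sum]
    refine Finset.sum_congr rfl (fun i _ => ?_)
    have e1 : j + i - j = i := by omega
    have e2 : j + i + 2 = (j + 2) + i := by omega
    rw [e1, e2, pow_add]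
    have : (2:ℝ)^i * ((1:ℝ)/4)^i = ((1:ℝ)/2)^i := by rw [← mul_pow]; norm_num
    calc (2:ℝ)^i * ((1/4:ℝ)^(j+2) * (1/4)^i)
        = (1/4:ℝ)^(j+2) * ((2:ℝ)^i * ((1:ℝ)/4)^i) := by ring
      _ = (1/4:ℝ)^(j+2) * ((1:ℝ)/2)^i := by rw [this]
  rw [this]
  have hg := geom_half_le (L - j)
  have hp : (0:ℝ) ≤ (1/4:ℝ)^(j+2) := by positivity
  have : (1/4:ℝ)^(j+2) * 4 = (1/4:ℝ)^(j+1) := by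
    rw [pow_succ]; ring
  nlinarith

lemma tendsto_C_pow (C : ℝ) : Tendsto (fun j : ℕ => C * (1/4:ℝ)^(j+1)) atTop (nhds 0) := by
  have h : Tendsto (fun j : ℕ => ((1:ℝ)/4)^j) atTop (nhds 0) :=
    tendsto_pow_atTop_nhds_zero_of_lt_one (by norm_num) (by norm_num)
  have e : ∀ j : ℕ, C * (1/4) * ((1:ℝ)/4)^j = C * (1/4:ℝ)^(j+1) := by
    intro j; rw [pow_succ]; ring
  have := (h.const_mul (C * (1/4))).congr e
  simpa using this

lemma tendsto_limsup_zero (L : ℕ → ℝ) (u : ℕ → ℝ) (mm : ℕ → ℕ)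
    (hL0 : ∀ k, 0 ≤ L k) (hu : Tendsto u atTop (nhds 0))
    (hLu : ∀ j, ∀ k, mm j ≤ k → L k ≤ u j) : Tendsto L atTop (nhds 0) := by
  rw [Metric.tendsto_atTop]
  intro ε hε
  obtain ⟨j, hj⟩ := (hu.eventually (gt_mem_nhds hε)).exists
  exact ⟨mm j, fun k hk => by
    rw [Real.dist_eq, sub_zero, abs_of_nonneg (hL0 k)]
    exact lt_of_le_of_lt (hLu j k hk) hj⟩


lemma symmdiff_zero_image {G : Type*} [DecidableEq G] {A B : Finset G} {c : ℕ}
    (hA : A.card ≤ c) (hApos : 0 < A.card)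
    (hr : (((A \ B) ∪ (B \ A)).card : ℝ) / (A.card : ℝ) < ((c:ℝ))⁻¹) : B = A := by
  have hc : 0 < c := lt_of_lt_of_le hApos hA
  have hAposR : (0:ℝ) < (A.card : ℝ) := by exact_mod_cast hApos
  have h1 : (((A \ B) ∪ (B \ A)).card : ℝ) < (A.card : ℝ) * ((c:ℝ))⁻¹ := by
    rwa [div_lt_iff₀ hAposR, mul_comm] at hr
  have h2 : (A.card : ℝ) * ((c:ℝ))⁻¹ ≤ 1 := by
    rw [← le_div_iff₀ (by positivity : (0:ℝ) < ((c:ℝ))⁻¹)]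
    simp only [one_div, inv_inv]
    exact_mod_cast hA
  have h3 : (((A \ B) ∪ (B \ A)).card : ℝ) < 1 := lt_of_lt_of_le h1 h2
  have h4 : ((A \ B) ∪ (B \ A)).card = 0 := by exact_mod_cast Nat.lt_one_iff.mp (by exact_mod_cast h3)
  have h5 : (A \ B) ∪ (B \ A) = ∅ := Finset.card_eq_zero.mp h4
  have h6 := Finset.union_eq_empty.mp h5
  have hAB : A ⊆ B := Finset.sdiff_eq_empty_iff_subset.mp h6.1
  have hBA : B ⊆ A := Finset.sdiff_eq_empty_iff_subset.mp h6.2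
  exact Finset.Subset.antisymm hBA hAB

lemma folner_card_tendsto {G : Type*} [Group G] [Infinite G] [DecidableEq G]
    (F : ℕ → Finset G) (hne : ∀ n, (F n).Nonempty)
    (hFolner : ∀ g : G, Tendsto
      (fun n : ℕ => ((((F n) \ ((F n).image (· * g))) ∪
          (((F n).image (· * g)) \ F n)).card : ℝ) / ((F n).card : ℝ)) atTop (nhds 0)) :
    Tendsto (fun n => (F n).card) atTop atTop := by
  rw [tendsto_atTop]
  intro C
  have emb := Infinite.natEmbedding G
  have hev : ∀ᶠ n in atTop, ∀ i ∈ Finset.range C,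
      ((((F n) \ ((F n).image (· * emb i))) ∪
        (((F n).image (· * emb i)) \ F n)).card : ℝ) / ((F n).card : ℝ) < ((C:ℝ))⁻¹ := by
    rw [eventually_all_finset]
    intro i _
    rcases Nat.eq_zero_or_pos C with hC | hC
    · subst hC; simp at *
    exact (hFolner (emb i)).eventually (gt_mem_nhds (by positivity))
  filter_upwards [hev] with n hn
  by_contra hlt
  push_neg at hlt
  have hcard : (F n).card ≤ C := le_of_lt hlt
  have hpos : 0 < (F n).card := Finset.card_pos.mpr (hne n)
  have himg : ∀ i ∈ Finset.range C, (F n).image (· * emb i) = F n := by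
    intro i hi
    exact symmdiff_zero_image hcard hpos (hn i hi)
  obtain ⟨a, ha⟩ := hne n
  have hsub : (Finset.range C).image (fun i => a * emb i) ⊆ F n := by
    intro x hx
    obtain ⟨i, hi, rfl⟩ := Finset.mem_image.mp hx
    rw [← himg i hi]
    exact Finset.mem_image_of_mem _ ha
  have hinj : Function.Injective (fun i : ℕ => a * emb i) := by
    intro i j hij
    exact emb.injective (mul_left_cancel hij)
  have := Finset.card_le_card hsub
  rw [Finset.card_image_of_injective _ hinj, Finset.card_range] at this
  omega

lemma folner_eventually_univ {G : Type*} [Group G] [Fintype G] [DecidableEq G]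
    (F : ℕ → Finset G) (hne : ∀ n, (F n).Nonempty)
    (hFolner : ∀ g : G, Tendsto
      (fun n : ℕ => ((((F n) \ ((F n).image (· * g))) ∪
          (((F n).image (· * g)) \ F n)).card : ℝ) / ((F n).card : ℝ)) atTop (nhds 0)) :
    ∀ᶠ n in atTop, F n = Finset.univ := by
  set c := Fintype.card G with hc
  have hcpos : 0 < c := Fintype.card_pos
  have hev : ∀ᶠ n in atTop, ∀ g : G,
      ((((F n) \ ((F n).image (· * g))) ∪
        (((F n).image (· * g)) \ F n)).card : ℝ) / ((F n).card : ℝ) < ((c:ℝ))⁻¹ := by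
    rw [Filter.eventually_all]
    intro g
    exact (hFolner g).eventually (gt_mem_nhds (by positivity))
  filter_upwards [hev] with n hn
  have hcard : (F n).card ≤ c := Finset.card_le_card (Finset.subset_univ _) |>.trans_eq (Finset.card_univ)
  have hpos : 0 < (F n).card := Finset.card_pos.mpr (hne n)
  obtain ⟨a, ha⟩ := hne n
  apply Finset.eq_univ_iff_forall.mpr
  intro b
  have himg : (F n).image (· * (a⁻¹ * b)) = F n := symmdiff_zero_image hcard hpos (hn _)
  have : a * (a⁻¹ * b) ∈ F n := by
    rw [← himg]; exact Finset.mem_image_of_mem _ ha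
  simpa [mul_assoc] using this

noncomputable def avgN {G : Type*} {H : Type*} [NormedAddCommGroup H]
    (A : ℕ → Finset G) (u : G → H) (q : ℕ) : ℝ :=
  ((A q).card : ℝ)⁻¹ * ∑ g ∈ A q, ‖u g‖^2

theorem aux_complete {G : Type*} [DecidableEq G]
    {H : Type*} [NormedAddCommGroup H] [CompleteSpace H]
    (A : ℕ → Finset G) (hne : ∀ q, (A q).Nonempty)
    (e : G → ℕ) (he : Function.Injective e)
    (hdicho : Tendsto (fun q => ((A q).card : ℝ)⁻¹) atTop (nhds 0) ∨
      ∃ _ : Fintype G, ∀ᶠ q in atTop, A q = Finset.univ)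
    (ξ : ℕ → G → H)
    (hSA : ∀ a : ℕ, BddAbove (Set.range (avgN A (ξ a))))
    (hCauchy : ∀ ε : ℝ, 0 < ε → ∃ M : ℕ, ∀ a ≥ M, ∀ b ≥ M,
      Filter.limsup (avgN A (fun g => ξ a g - ξ b g)) atTop < ε) :
    ∃ ζ : G → H,
      BddAbove (Set.range (avgN A ζ)) ∧
      Tendsto (fun k => Filter.limsup (avgN A (fun g => ξ k g - ζ g)) atTop)
        atTop (nhds 0) := by
  classical
  have hcardpos : ∀ q, 0 < (A q).card := fun q => Finset.card_pos.mpr (hne q)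
  have hWnn : ∀ q, (0:ℝ) ≤ ((A q).card : ℝ)⁻¹ := fun q => by positivity
  have havg_nonneg : ∀ (u : G → H) q, 0 ≤ avgN A u q := fun u q => by
    unfold avgN; positivity
  have hav_le : ∀ (u : G → H) (b : ℝ) q, (∀ g, ‖u g‖^2 ≤ b) → avgN A u q ≤ b := by
    intro u b q hb
    unfold avgN
    have hpos : (0:ℝ) < ((A q).card : ℝ) := by exact_mod_cast hcardpos q
    calc ((A q).card : ℝ)⁻¹ * ∑ g ∈ A q, ‖u g‖^2
        ≤ ((A q).card : ℝ)⁻¹ * ∑ _g ∈ A q, b :=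
          mul_le_mul_of_nonneg_left (Finset.sum_le_sum (fun g _ => hb g)) (hWnn q)
      _ = b := by
          rw [Finset.sum_const, nsmul_eq_mul, ← mul_assoc,
            inv_mul_cancel₀ (ne_of_gt hpos), one_mul]
  have hsplit : ∀ (x y z : G → H) q,
      avgN A (fun g => x g - z g) q ≤
        2 * avgN A (fun g => x g - y g) q + 2 * avgN A (fun g => y g - z g) q := by
    intro x y z q
    unfold avgN
    have h1 : ∑ g ∈ A q, ‖x g - z g‖^2 ≤
        ∑ g ∈ A q, (2*‖x g - y g‖^2 + 2*‖y g - z g‖^2) :=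
      Finset.sum_le_sum (fun g _ => sq_tri (x g) (y g) (z g))
    calc ((A q).card:ℝ)⁻¹ * ∑ g ∈ A q, ‖x g - z g‖^2
        ≤ ((A q).card:ℝ)⁻¹ * ∑ g ∈ A q, (2*‖x g - y g‖^2 + 2*‖y g - z g‖^2) :=
          mul_le_mul_of_nonneg_left h1 (hWnn q)
      _ = 2 * (((A q).card:ℝ)⁻¹ * ∑ g ∈ A q, ‖x g - y g‖^2)
          + 2*(((A q).card:ℝ)⁻¹ * ∑ g ∈ A q, ‖y g - z g‖^2) := by
          rw [Finset.sum_add_distrib]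
          rw [show (∑ g ∈ A q, 2*‖x g - y g‖^2) = 2 * ∑ g ∈ A q, ‖x g - y g‖^2 from
            (Finset.mul_sum _ _ _).symm]
          rw [show (∑ g ∈ A q, 2*‖y g - z g‖^2) = 2 * ∑ g ∈ A q, ‖y g - z g‖^2 from
            (Finset.mul_sum _ _ _).symm]
          ring
  have hsplit0 : ∀ (x y : G → H) q,
      avgN A y q ≤ 2 * avgN A (fun g => x g - y g) q + 2 * avgN A x q := by
    intro x y q
    unfold avgN
    have h1 : ∑ g ∈ A q, ‖y g‖^2 ≤
        ∑ g ∈ A q, (2*‖x g - y g‖^2 + 2*‖x g‖^2) :=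
      Finset.sum_le_sum (fun g _ => sq_zero_tri (x g) (y g))
    calc ((A q).card:ℝ)⁻¹ * ∑ g ∈ A q, ‖y g‖^2
        ≤ ((A q).card:ℝ)⁻¹ * ∑ g ∈ A q, (2*‖x g - y g‖^2 + 2*‖x g‖^2) :=
          mul_le_mul_of_nonneg_left h1 (hWnn q)
      _ = 2 * (((A q).card:ℝ)⁻¹ * ∑ g ∈ A q, ‖x g - y g‖^2)
          + 2*(((A q).card:ℝ)⁻¹ * ∑ g ∈ A q, ‖x g‖^2) := by
          rw [Finset.sum_add_distrib]
          rw [show (∑ g ∈ A q, 2*‖x g - y g‖^2) = 2 * ∑ g ∈ A q, ‖x g - y g‖^2 from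
            (Finset.mul_sum _ _ _).symm]
          rw [show (∑ g ∈ A q, 2*‖x g‖^2) = 2 * ∑ g ∈ A q, ‖x g‖^2 from
            (Finset.mul_sum _ _ _).symm]
          ring
  have hSAub : ∀ a : ℕ, ∃ B, ∀ q, avgN A (ξ a) q ≤ B := by
    intro a
    obtain ⟨B, hB⟩ := hSA a
    exact ⟨B, fun q => hB (Set.mem_range_self q)⟩
  have hBd : ∀ a b : ℕ, ∃ C, ∀ q, avgN A (fun g => ξ a g - ξ b g) q ≤ C := by
    intro a b
    obtain ⟨Ba, hBa⟩ := hSAub a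
    obtain ⟨Bb, hBb⟩ := hSAub b
    refine ⟨2*Ba + 2*Bb, fun q => ?_⟩
    have h1 := hsplit (ξ a) (fun _ => 0) (ξ b) q
    have e1 : avgN A (fun g => ξ a g - (fun _ : G => (0:H)) g) q = avgN A (ξ a) q := by
      unfold avgN; congr 1; exact Finset.sum_congr rfl (fun g _ => by simp)
    have e2 : avgN A (fun g => (fun _ : G => (0:H)) g - ξ b g) q = avgN A (ξ b) q := by
      unfold avgN; congr 1; exact Finset.sum_congr rfl (fun g _ => by simp)
    rw [e1, e2] at h1
    have := hBa q; have := hBb q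
    linarith
  have hBdd : ∀ a b : ℕ, IsBoundedUnder (· ≤ ·) atTop (avgN A (fun g => ξ a g - ξ b g)) := by
    intro a b
    obtain ⟨C, hC⟩ := hBd a b
    exact isBoundedUnder_of ⟨C, hC⟩
  have hCobdd : ∀ (u : G → H), IsCoboundedUnder (· ≤ ·) atTop (avgN A u) := by
    intro u
    have h : IsBoundedUnder (· ≥ ·) atTop (avgN A u) :=
      isBoundedUnder_of ⟨0, fun q => havg_nonneg u q⟩
    exact h.isCoboundedUnder_le
  -- the Cauchy scale
  choose M hM using fun j : ℕ => hCauchy ((1/4:ℝ)^(j+2)) (by positivity)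
  set m : ℕ → ℕ := fun j => (Finset.range (j+1)).sup M with hm_def
  have hm_mono : Monotone m := fun i j hij =>
    Finset.sup_mono (Finset.range_subset_range.mpr (by omega))
  have hmM : ∀ j, M j ≤ m j := fun j => Finset.le_sup (Finset.mem_range.mpr (by omega))
  have hlim : ∀ j a b, m j ≤ a → m j ≤ b →
      limsup (avgN A (fun g => ξ a g - ξ b g)) atTop < (1/4:ℝ)^(j+2) := by
    intro j a b ha hb
    exact hM j a (le_trans (hmM j) ha) b (le_trans (hmM j) hb)
  have hd : ∀ l, limsup (avgN A (fun g => ξ (m l) g - ξ (m (l+1)) g)) atTop < (1/4:ℝ)^(l+2) :=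
    fun l => hlim l (m l) (m (l+1)) le_rfl (hm_mono (Nat.le_succ l))
  have hd_ev : ∀ l, ∀ᶠ q in atTop,
      avgN A (fun g => ξ (m l) g - ξ (m (l+1)) g) q < (1/4:ℝ)^(l+2) :=
    fun l => eventually_lt_of_limsup_lt (hd l) (hBdd _ _)
  -- main construction, case split
  have key : ∃ ζ : G → H,
      (∃ C0 : ℝ, ∀ q, avgN A (fun g => ξ (m 0) g - ζ g) q ≤ C0) ∧
      (∃ u : ℕ → ℝ, Tendsto u atTop (nhds 0) ∧
        ∀ j, ∀ᶠ q in atTop, avgN A (fun g => ξ (m j) g - ζ g) q ≤ u j) := by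
    rcases hdicho with hW0 | hfin
    · -- infinite case: weights tend to zero
      have hSex : ∀ l : ℕ, ∃ S : ℕ, ∀ q,
          ((A q).card : ℝ)⁻¹ * ∑ g ∈ (A q).filter (fun g => S ≤ e g),
            ‖ξ (m l) g - ξ (m (l+1)) g‖^2 ≤ (1/4:ℝ)^(l+2) := by
        intro l
        obtain ⟨Q, hQ⟩ := eventually_atTop.mp (hd_ev l)
        refine ⟨(Finset.range Q).sup (fun q' => ((A q').sup e) + 1), fun q => ?_⟩
        rcases lt_or_ge q Q with hq | hq
        · have hempty : (A q).filter
              (fun g => (Finset.range Q).sup (fun q' => ((A q').sup e) + 1) ≤ e g) = ∅ := by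
            rw [Finset.filter_eq_empty_iff]
            intro g hg
            have h1 : e g ≤ (A q).sup e := Finset.le_sup hg
            have h2 : (A q).sup e + 1 ≤ (Finset.range Q).sup (fun q' => ((A q').sup e) + 1) :=
              Finset.le_sup (f := fun q' => ((A q').sup e) + 1) (Finset.mem_range.mpr hq)
            omega
          rw [hempty]
          simp only [Finset.sum_empty, mul_zero]
          positivity
        · have h1 := (hQ q hq).le
          unfold avgN at h1
          refine le_trans ?_ h1
          exact mul_le_mul_of_nonneg_left
            (Finset.sum_le_sum_of_subset_of_nonneg (Finset.filter_subset _ _)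
              (fun g _ _ => by positivity)) (hWnn q)
      choose S hS using hSex
      have hS'mono : ∀ a b : ℕ, a ≤ b →
          (a+1) + (Finset.range (a+1)).sup S ≤ (b+1) + (Finset.range (b+1)).sup S :=
        fun a b hab => add_le_add (by omega)
          (Finset.sup_mono (Finset.range_subset_range.mpr (by omega)))
      have hcdxex : ∀ g : G, ∃ n : ℕ, (e g < (n+1) + (Finset.range (n+1)).sup S) ∧
          ∀ l, l < n → (l+1) + (Finset.range (l+1)).sup S ≤ e g := by
        intro g
        have hex : ∃ l, e g < (l+1) + (Finset.range (l+1)).sup S :=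
          ⟨e g, by omega⟩
        exact ⟨Nat.find hex, Nat.find_spec hex, fun l hl => le_of_not_gt (Nat.find_min hex hl)⟩
      choose cdx hcdx1 hcdx2 using hcdxex
      -- improved tail control
      have hS'2 : ∀ l q, ((A q).card : ℝ)⁻¹ * ∑ g ∈ (A q).filter (fun g => l < cdx g),
          ‖ξ (m l) g - ξ (m (l+1)) g‖^2 ≤ (1/4:ℝ)^(l+2) := by
        intro l q
        refine le_trans (mul_le_mul_of_nonneg_left
          (Finset.sum_le_sum_of_subset_of_nonneg ?_ (fun g _ _ => by positivity)) (hWnn q))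
          (hS l q)
        intro g hg
        rw [Finset.mem_filter] at hg ⊢
        refine ⟨hg.1, ?_⟩
        have h1 := hcdx2 g l hg.2
        have h2 : S l ≤ (Finset.range (l+1)).sup S :=
          Finset.le_sup (Finset.mem_range.mpr (by omega))
        omega
      -- finite head sets
      have hTfin : ∀ j : ℕ, Set.Finite {g : G | e g < (j+1) + (Finset.range (j+1)).sup S} :=
        fun j => Set.Finite.preimage he.injOn (Set.finite_Iio _)
      -- the main estimate
      have hmain : ∀ j q, avgN A (fun g => ξ (m j) g - ξ (m (cdx g)) g) q ≤
          ((A q).card : ℝ)⁻¹ *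
            (∑ g ∈ (hTfin j).toFinset, ‖ξ (m j) g - ξ (m (cdx g)) g‖^2) + (1/4:ℝ)^(j+1) := by
        intro j q
        unfold avgN
        rw [← Finset.sum_filter_add_sum_filter_not (A q) (fun g => cdx g < j)
          (fun g => ‖ξ (m j) g - ξ (m (cdx g)) g‖^2), mul_add]
        apply add_le_add
        · -- head term
          apply mul_le_mul_of_nonneg_left ?_ (hWnn q)
          apply Finset.sum_le_sum_of_subset_of_nonneg
          · intro g hg
            rw [Finset.mem_filter] at hg
            rw [Set.Finite.mem_toFinset, Set.mem_setOf_eq]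
            exact lt_of_lt_of_le (hcdx1 g) (hS'mono _ _ (le_of_lt hg.2))
          · intro g _ _; positivity
        · -- tail term
          have hcdxle : ∀ g ∈ A q, cdx g < (A q).sup cdx + 1 := fun g hg => by
            have := Finset.le_sup (f := cdx) hg; omega
          calc ((A q).card : ℝ)⁻¹ * ∑ g ∈ (A q).filter (fun g => ¬ cdx g < j),
                ‖ξ (m j) g - ξ (m (cdx g)) g‖^2
              ≤ ((A q).card : ℝ)⁻¹ * ∑ g ∈ (A q).filter (fun g => ¬ cdx g < j),
                (2 * ∑ l ∈ Ico j (cdx g), (2:ℝ)^(l-j) * ‖ξ (m l) g - ξ (m (l+1)) g‖^2) := by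
                apply mul_le_mul_of_nonneg_left ?_ (hWnn q)
                apply Finset.sum_le_sum
                intro g hg
                rw [Finset.mem_filter] at hg
                exact tele_sq_bound (fun l => ξ (m l) g) (le_of_not_gt hg.2)
            _ ≤ ((A q).card : ℝ)⁻¹ * ∑ g ∈ A q,
                (2 * ∑ l ∈ Ico j (cdx g), (2:ℝ)^(l-j) * ‖ξ (m l) g - ξ (m (l+1)) g‖^2) := by
                apply mul_le_mul_of_nonneg_left ?_ (hWnn q)
                apply Finset.sum_le_sum_of_subset_of_nonneg (Finset.filter_subset _ _)
                intro g _ _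
                exact mul_nonneg (by norm_num)
                  (Finset.sum_nonneg (fun l _ => by positivity))
            _ = 2 * ∑ l ∈ Ico j ((A q).sup cdx + 1), (2:ℝ)^(l-j) *
                (((A q).card : ℝ)⁻¹ * ∑ g ∈ (A q).filter (fun g => l < cdx g),
                  ‖ξ (m l) g - ξ (m (l+1)) g‖^2) := by
                have hper : ∀ g ∈ A q,
                    ∑ l ∈ Ico j (cdx g), (2:ℝ)^(l-j) * ‖ξ (m l) g - ξ (m (l+1)) g‖^2
                    = ∑ l ∈ Ico j ((A q).sup cdx + 1),
                      (if l < cdx g then (2:ℝ)^(l-j) * ‖ξ (m l) g - ξ (m (l+1)) g‖^2 else 0) := by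
                  intro g hg
                  rw [← Finset.sum_filter]
                  apply Finset.sum_congr ?_ (fun l _ => rfl)
                  ext l
                  simp only [Finset.mem_filter, Finset.mem_Ico]
                  have := hcdxle g hg
                  omega
                have hre : ∑ g ∈ A q,
                    (2 * ∑ l ∈ Ico j (cdx g), (2:ℝ)^(l-j) * ‖ξ (m l) g - ξ (m (l+1)) g‖^2)
                    = 2 * ∑ l ∈ Ico j ((A q).sup cdx + 1),
                      ∑ g ∈ (A q).filter (fun g => l < cdx g),
                        (2:ℝ)^(l-j) * ‖ξ (m l) g - ξ (m (l+1)) g‖^2 := by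
                  rw [← Finset.mul_sum]
                  congr 1
                  rw [Finset.sum_congr rfl hper, Finset.sum_comm]
                  exact Finset.sum_congr rfl (fun l _ => (Finset.sum_filter _ _).symm)
                rw [hre]
                rw [show ((A q).card : ℝ)⁻¹ * (2 * ∑ l ∈ Ico j ((A q).sup cdx + 1),
                      ∑ g ∈ (A q).filter (fun g => l < cdx g),
                        (2:ℝ)^(l-j) * ‖ξ (m l) g - ξ (m (l+1)) g‖^2)
                    = 2 * (((A q).card : ℝ)⁻¹ * ∑ l ∈ Ico j ((A q).sup cdx + 1),
                      ∑ g ∈ (A q).filter (fun g => l < cdx g),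
                        (2:ℝ)^(l-j) * ‖ξ (m l) g - ξ (m (l+1)) g‖^2) from by ring]
                rw [Finset.mul_sum]
                congr 1
                apply Finset.sum_congr rfl
                intro l _
                rw [← Finset.mul_sum]
                ring
            _ ≤ 2 * ∑ l ∈ Ico j ((A q).sup cdx + 1), (2:ℝ)^(l-j) * (1/4:ℝ)^(l+2) := by
                apply mul_le_mul_of_nonneg_left ?_ (by norm_num)
                apply Finset.sum_le_sum
                intro l _
                exact mul_le_mul_of_nonneg_left (hS'2 l q) (by positivity)
            _ ≤ (1/4:ℝ)^(j+1) := tail_geom_bound j _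
      -- conclude
      have hK : ∀ j, (0:ℝ) ≤ ∑ g ∈ (hTfin j).toFinset, ‖ξ (m j) g - ξ (m (cdx g)) g‖^2 :=
        fun j => Finset.sum_nonneg fun g _ => by positivity
      have hWK : ∀ j, Tendsto (fun q => ((A q).card : ℝ)⁻¹ *
          (∑ g ∈ (hTfin j).toFinset, ‖ξ (m j) g - ξ (m (cdx g)) g‖^2)) atTop (nhds 0) := by
        intro j
        have h := hW0.mul_const (∑ g ∈ (hTfin j).toFinset, ‖ξ (m j) g - ξ (m (cdx g)) g‖^2)
        simpa using h
      have hW1 : ∀ q, ((A q).card : ℝ)⁻¹ ≤ 1 := by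
        intro q
        apply inv_le_one_of_one_le₀
        exact_mod_cast hcardpos q
      refine ⟨fun g => ξ (m (cdx g)) g, ⟨(∑ g ∈ (hTfin 0).toFinset,
        ‖ξ (m 0) g - ξ (m (cdx g)) g‖^2) + 1, fun q => ?_⟩,
        ⟨fun j => 2*(1/4:ℝ)^(j+1), tendsto_C_pow 2, fun j => ?_⟩⟩
      · calc avgN A (fun g => ξ (m 0) g - ξ (m (cdx g)) g) q
            ≤ ((A q).card : ℝ)⁻¹ *
              (∑ g ∈ (hTfin 0).toFinset, ‖ξ (m 0) g - ξ (m (cdx g)) g‖^2) + (1/4:ℝ)^(0+1) :=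
              hmain 0 q
          _ ≤ (∑ g ∈ (hTfin 0).toFinset, ‖ξ (m 0) g - ξ (m (cdx g)) g‖^2) + 1 := by
              have h1 := mul_le_of_le_one_left (hK 0) (hW1 q)
              have h2 : (1/4:ℝ)^(0+1) ≤ 1 := by norm_num
              linarith
      · have hev := (hWK j).eventually (gt_mem_nhds (show (0:ℝ) < (1/4:ℝ)^(j+1) by positivity))
        filter_upwards [hev] with q hq
        calc avgN A (fun g => ξ (m j) g - ξ (m (cdx g)) g) q
            ≤ ((A q).card : ℝ)⁻¹ *
              (∑ g ∈ (hTfin j).toFinset, ‖ξ (m j) g - ξ (m (cdx g)) g‖^2) + (1/4:ℝ)^(j+1) :=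
              hmain j q
          _ ≤ 2*(1/4:ℝ)^(j+1) := by linarith
    · -- finite case
      obtain ⟨hfty, huniv⟩ := hfin
      obtain ⟨g0, _⟩ := hne 0
      haveI : Nonempty G := ⟨g0⟩
      have hcR : (0:ℝ) < (Fintype.card G : ℝ) := by exact_mod_cast Fintype.card_pos
      have hdg : ∀ l (g : G), ‖ξ (m l) g - ξ (m (l+1)) g‖^2 ≤
          (Fintype.card G : ℝ) * (1/4:ℝ)^(l+2) := by
        intro l g
        obtain ⟨q, hq1, hq2⟩ := ((hd_ev l).and huniv).exists
        have h0 := hq1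
        unfold avgN at h0
        rw [hq2, Finset.card_univ] at h0
        have h2 : ∑ g' : G, ‖(fun g => ξ (m l) g - ξ (m (l+1)) g) g'‖^2
            = (Fintype.card G : ℝ) * ((Fintype.card G : ℝ)⁻¹ *
              ∑ g' : G, ‖(fun g => ξ (m l) g - ξ (m (l+1)) g) g'‖^2) := by
          rw [← mul_assoc, mul_inv_cancel₀ (ne_of_gt hcR), one_mul]
        have h1 : ∑ g' : G, ‖(fun g => ξ (m l) g - ξ (m (l+1)) g) g'‖^2
            < (Fintype.card G : ℝ) * (1/4:ℝ)^(l+2) := by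
          rw [h2]; exact mul_lt_mul_of_pos_left h0 hcR
        calc ‖ξ (m l) g - ξ (m (l+1)) g‖^2
            ≤ ∑ g' ∈ (Finset.univ : Finset G), ‖ξ (m l) g' - ξ (m (l+1)) g'‖^2 :=
              Finset.single_le_sum (f := fun g' => ‖ξ (m l) g' - ξ (m (l+1)) g'‖^2)
                (fun i _ => by positivity) (Finset.mem_univ g)
          _ ≤ (Fintype.card G : ℝ) * (1/4:ℝ)^(l+2) := le_of_lt h1
      have hcau : ∀ g : G, CauchySeq (fun l => ξ (m l) g) := by
        intro g
        apply cauchySeq_of_le_geometric (1/2 : ℝ) (Real.sqrt (Fintype.card G)) (by norm_num)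
        intro l
        rw [dist_eq_norm]
        have hb : (0:ℝ) ≤ Real.sqrt (Fintype.card G) * (1/2:ℝ)^l := by positivity
        have h1 : ‖ξ (m l) g - ξ (m (l+1)) g‖^2 ≤
            (Real.sqrt (Fintype.card G) * (1/2:ℝ)^l)^2 := by
          rw [mul_pow, Real.sq_sqrt (by positivity)]
          have e1 : ((1/2:ℝ)^l)^2 = (1/4:ℝ)^l := by
            rw [← pow_mul, mul_comm l 2, pow_mul]; norm_num
          rw [e1]
          calc ‖ξ (m l) g - ξ (m (l+1)) g‖^2
              ≤ (Fintype.card G : ℝ) * (1/4:ℝ)^(l+2) := hdg l g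
            _ ≤ (Fintype.card G : ℝ) * (1/4:ℝ)^l :=
                mul_le_mul_of_nonneg_left
                  (pow_le_pow_of_le_one (by norm_num) (by norm_num) (by omega)) hcR.le
        nlinarith [norm_nonneg (ξ (m l) g - ξ (m (l+1)) g)]
      choose ζ hζ using fun g => cauchySeq_tendsto_of_complete (hcau g)
      have hpt : ∀ j (g : G), ‖ξ (m j) g - ζ g‖^2 ≤ (Fintype.card G : ℝ) * (1/4:ℝ)^(j+1) := by
        intro j g
        have hLb : ∀ L, j ≤ L → ‖ξ (m j) g - ξ (m L) g‖^2 ≤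
            (Fintype.card G : ℝ) * (1/4:ℝ)^(j+1) := by
          intro L hL
          have hsum : ∑ l ∈ Ico j L, (2:ℝ)^(l-j) * ((Fintype.card G : ℝ) * (1/4:ℝ)^(l+2))
              = (Fintype.card G : ℝ) * ∑ l ∈ Ico j L, (2:ℝ)^(l-j) * (1/4:ℝ)^(l+2) := by
            rw [Finset.mul_sum]
            exact Finset.sum_congr rfl (fun l _ => by ring)
          calc ‖ξ (m j) g - ξ (m L) g‖^2
              ≤ 2 * ∑ l ∈ Ico j L, (2:ℝ)^(l-j) * ‖ξ (m l) g - ξ (m (l+1)) g‖^2 :=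
                tele_sq_bound (fun l => ξ (m l) g) hL
            _ ≤ 2 * ∑ l ∈ Ico j L, (2:ℝ)^(l-j) * ((Fintype.card G : ℝ) * (1/4:ℝ)^(l+2)) := by
                apply mul_le_mul_of_nonneg_left ?_ (by norm_num)
                exact Finset.sum_le_sum (fun l _ =>
                  mul_le_mul_of_nonneg_left (hdg l g) (by positivity))
            _ = (Fintype.card G : ℝ) * (2 * ∑ l ∈ Ico j L, (2:ℝ)^(l-j) * (1/4:ℝ)^(l+2)) := by
                rw [hsum]; ring
            _ ≤ (Fintype.card G : ℝ) * (1/4:ℝ)^(j+1) :=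
                mul_le_mul_of_nonneg_left (tail_geom_bound j L) hcR.le
        have hten : Tendsto (fun L => ‖ξ (m j) g - ξ (m L) g‖^2) atTop
            (nhds (‖ξ (m j) g - ζ g‖^2)) :=
          ((tendsto_const_nhds.sub (hζ g)).norm.pow 2)
        exact le_of_tendsto hten (eventually_atTop.mpr ⟨j, hLb⟩)
      exact ⟨ζ, ⟨(Fintype.card G : ℝ) * (1/4:ℝ)^(0+1), fun q => hav_le _ _ q (hpt 0)⟩,
        ⟨fun j => (Fintype.card G : ℝ) * (1/4:ℝ)^(j+1), tendsto_C_pow _,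
          fun j => Eventually.of_forall (fun q => hav_le _ _ q (hpt j))⟩⟩
  obtain ⟨ζ, ⟨C0, hC0⟩, ⟨u, hu0, huj⟩⟩ := key
  have hbddk : ∀ k, IsBoundedUnder (· ≤ ·) atTop (avgN A (fun g => ξ k g - ζ g)) := by
    intro k
    obtain ⟨C, hC⟩ := hBd k (m 0)
    refine isBoundedUnder_of ⟨2*C + 2*C0, fun q => ?_⟩
    calc avgN A (fun g => ξ k g - ζ g) q
        ≤ 2 * avgN A (fun g => ξ k g - ξ (m 0) g) q
          + 2 * avgN A (fun g => ξ (m 0) g - ζ g) q := hsplit _ _ _ q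
      _ ≤ 2*C + 2*C0 := by have := hC q; have := hC0 q; linarith
  refine ⟨ζ, ?_, ?_⟩
  · obtain ⟨B0, hB0⟩ := hSAub (m 0)
    refine ⟨2*C0 + 2*B0, ?_⟩
    rintro x ⟨q, rfl⟩
    calc avgN A ζ q
        ≤ 2 * avgN A (fun g => ξ (m 0) g - ζ g) q + 2 * avgN A (ξ (m 0)) q :=
          hsplit0 _ _ q
      _ ≤ 2*C0 + 2*B0 := by have := hC0 q; have := hB0 q; linarith
  · apply tendsto_limsup_zero _ (fun j => 2*(1/4:ℝ)^(j+2) + 2*u j) m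
    · intro k
      exact le_limsup_of_frequently_le (Frequently.of_forall fun q => havg_nonneg _ q) (hbddk k)
    · have h1 : Tendsto (fun j : ℕ => 2*(1/4:ℝ)^(j+2)) atTop (nhds 0) := by
        have h2 := tendsto_C_pow (1/2)
        apply h2.congr
        intro j
        rw [show j + 2 = (j+1)+1 by omega, pow_succ]
        ring
      have h2 := hu0.const_mul (2:ℝ)
      simpa using h1.add h2
    · intro j k hk
      have hev1 : ∀ᶠ q in atTop, avgN A (fun g => ξ k g - ξ (m j) g) q < (1/4:ℝ)^(j+2) :=
        eventually_lt_of_limsup_lt (hlim j k (m j) hk le_rfl) (hBdd _ _)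
      apply limsup_le_of_le (hCobdd _)
      filter_upwards [hev1, huj j] with q hq1 hq2
      calc avgN A (fun g => ξ k g - ζ g) q
          ≤ 2 * avgN A (fun g => ξ k g - ξ (m j) g) q
            + 2 * avgN A (fun g => ξ (m j) g - ζ g) q := hsplit _ _ _ q
        _ ≤ 2*(1/4)^(j+2) + 2*u j := by linarith


/-- Completeness of the space of square-averageable `H`-valued sequences on `G`
(modulo null sequences) with respect to the averaged `L²`-seminorm along a
subsequence `(F_{N_q})` of a Følner sequence: every Cauchy sequence has a limit. -/
theorem square_averageable_complete
    {G : Type*} [Group G] [Countable G] [DecidableEq G]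
    {H : Type*} [NormedAddCommGroup H] [InnerProductSpace ℂ H] [CompleteSpace H]
    (F : ℕ → Finset G) (hne : ∀ n, (F n).Nonempty)
    (hFolner : ∀ g : G, Tendsto
      (fun n : ℕ => ((((F n) \ ((F n).image (· * g))) ∪
          (((F n).image (· * g)) \ F n)).card : ℝ) / ((F n).card : ℝ)) atTop (nhds 0))
    (Nq : ℕ → ℕ) (hNq : StrictMono Nq)
    (ξ : ℕ → G → H)
    -- each ξ m is square-averageable along (F (Nq q))
    (hSA : ∀ m : ℕ, BddAbove (Set.range fun q : ℕ =>
      ((F (Nq q)).card : ℝ)⁻¹ * ∑ g ∈ F (Nq q), ‖ξ m g‖ ^ 2))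
    -- (ξ m) is Cauchy for the averaged seminorm
    (hCauchy : ∀ ε : ℝ, 0 < ε → ∃ M : ℕ, ∀ m ≥ M, ∀ k ≥ M,
      Filter.limsup (fun q : ℕ =>
        ((F (Nq q)).card : ℝ)⁻¹ * ∑ g ∈ F (Nq q), ‖ξ m g - ξ k g‖ ^ 2) atTop < ε) :
    ∃ ζ : G → H,
      BddAbove (Set.range fun q : ℕ =>
        ((F (Nq q)).card : ℝ)⁻¹ * ∑ g ∈ F (Nq q), ‖ζ g‖ ^ 2) ∧
      Tendsto (fun m : ℕ => Filter.limsup (fun q : ℕ =>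
        ((F (Nq q)).card : ℝ)⁻¹ * ∑ g ∈ F (Nq q), ‖ξ m g - ζ g‖ ^ 2) atTop)
        atTop (nhds 0) := by
  classical
  obtain ⟨e, he⟩ := Countable.exists_injective_nat G
  have hdicho : Tendsto (fun q => ((F (Nq q)).card : ℝ)⁻¹) atTop (nhds 0) ∨
      ∃ _ : Fintype G, ∀ᶠ q in atTop, F (Nq q) = Finset.univ := by
    rcases finite_or_infinite G with hG | hG
    · right
      haveI := Fintype.ofFinite G
      exact ⟨inferInstance, hNq.tendsto_atTop.eventually (folner_eventually_univ F hne hFolner)⟩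
    · left
      have h1 := folner_card_tendsto F hne hFolner
      have h2 : Tendsto (fun q => ((F (Nq q)).card : ℝ)) atTop atTop :=
        tendsto_natCast_atTop_atTop.comp (h1.comp hNq.tendsto_atTop)
      exact h2.inv_tendsto_atTop
  obtain ⟨ζ, h1, h2⟩ := aux_complete (fun q => F (Nq q)) (fun q => hne (Nq q)) e he hdicho ξ
    (fun a => hSA a) (fun ε hε => hCauchy ε hε)
  exact ⟨ζ, h1, h2⟩
end
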